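/- arXiv:1809.03022 — 6 statements merged into one kernel-verified Lean document; each statement's English description precedes it below -/
import Mathlib

section
/- Let m ≥ 1 be an integer and let p be analytic in the open unit disc Δ = {z ∈ ℂ : |z| < 1} with p(0) = 1, with the derivatives p^(j)(0) = 0 for 1 ≤ j ≤ m−1 and p^(m)(0) ≠ 0 (i.e. p(z) = 1 + Σ_{n≥m} c_n zⁿ with c_m ≠ 0), and with p(z) ≠ 0 for all z ∈ Δ. Suppose there exists a point z₀ ∈ Δ such that Re p(z) > 0 for all z with |z| < |z₀|, Re p(z₀) = 0, and p(z₀) ≠ 0. If p(z₀) = −i·a for some real a > 0, then z₀·p′(z₀)/p(z₀) = i·k for some real number k satisfying k ≤ −(m/2)·(a + 1/a) ≤ −m ≤ −1. -/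
open Complex Metric Filter Set Function
open scoped Topology

lemma iteratedDeriv_zero_fun {n : ℕ} : iteratedDeriv n (fun _ : ℂ => (0:ℂ)) = fun _ => 0 := by
  induction n with
  | zero => simp [iteratedDeriv_zero]
  | succ n ih => rw [iteratedDeriv_succ, ih]; simp

/-- Factorization of an analytic function with vanishing derivatives up to order `m-1`. -/
lemma nunokawa_factor (m : ℕ) (q : ℂ → ℂ) (hq : AnalyticAt ℂ q 0)
    (h0 : ∀ j < m, iteratedDeriv j q 0 = 0) (hm : iteratedDeriv m q 0 ≠ 0) :
    ∃ G : ℂ → ℂ, AnalyticAt ℂ G 0 ∧ ∀ᶠ z in 𝓝 0, q z = z ^ m * G z := by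
  obtain ⟨ps, hps⟩ := hq
  have hcoeff : ∀ j < m, ps.coeff j = 0 := by
    intro j hj
    obtain ⟨r, hball⟩ := hps
    have h1 := hball.factorial_smul (1 : ℂ) j
    have h2 : iteratedFDeriv ℂ j q 0 (fun _ ↦ (1:ℂ)) = iteratedDeriv j q 0 := by
      rw [iteratedDeriv_eq_iteratedFDeriv]
    rw [h2, h0 j hj] at h1
    have h3 : Nat.factorial j • ps.coeff j = 0 := h1
    rcases smul_eq_zero.mp h3 with h | h
    · exact absurd h (Nat.factorial_ne_zero j)
    · exact h
  have hpsne : ps ≠ 0 := by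
    intro h
    rw [h] at hps
    have h4 : ∀ᶠ z in 𝓝 0, q z = 0 := hps.eventually_eq_zero
    have h5 : iteratedDeriv m q 0 = iteratedDeriv m (fun _ : ℂ => (0:ℂ)) 0 :=
      Filter.EventuallyEq.iteratedDeriv_eq m h4
    apply hm
    rw [h5, iteratedDeriv_zero_fun]
  have hord : m ≤ ps.order := by
    by_contra hlt
    push_neg at hlt
    exact ps.apply_order_ne_zero hpsne
      (FormalMultilinearSeries.coeff_eq_zero.mp (hcoeff ps.order hlt))
  have hg : AnalyticAt ℂ ((Function.swap dslope 0)^[ps.order] q) 0 :=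
    ⟨_, hps.has_fpower_series_iterate_dslope_fslope ps.order⟩
  refine ⟨fun z => z ^ (ps.order - m) * (Function.swap dslope 0)^[ps.order] q z,
    ((analyticAt_id.pow _).mul hg), ?_⟩
  filter_upwards with z
  have hz := hps.eq_pow_order_mul_iterate_dslope z
  rw [hz]
  rw [smul_eq_mul, sub_zero, ← mul_assoc, ← pow_add]
  congr 2
  omega

lemma nunokawa_geom (m : ℕ) (t : ℝ) (h0 : 0 ≤ t) (h1 : t ≤ 1) :
    (m:ℝ) * t ^ (m-1) * (1 - t) ≤ 1 - t ^ m := by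
  have hsum : (m:ℝ) * t ^ (m-1) ≤ ∑ i ∈ Finset.range m, t ^ i := by
    calc (m:ℝ) * t ^ (m-1) = ∑ _i ∈ Finset.range m, t ^ (m-1) := by
          rw [Finset.sum_const, Finset.card_range, nsmul_eq_mul]
      _ ≤ ∑ i ∈ Finset.range m, t ^ i := by
          refine Finset.sum_le_sum fun i hi => ?_
          exact pow_le_pow_of_le_one h0 h1 (Nat.le_sub_one_of_lt (Finset.mem_range.mp hi))
  have hgeom : (1 - t) * ∑ i ∈ Finset.range m, t ^ i = 1 - t ^ m := by
    have h := geom_sum_mul t m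
    linear_combination -h
  nlinarith [hsum, hgeom, sub_nonneg.mpr h1]

lemma nunokawa_alg (z₀ p' : ℂ) (κ a : ℝ) (ha : 0 < a)
    (hEq : z₀ * p' = -((κ:ℝ):ℂ) * (1 + (a:ℂ)^2) / 2) :
    z₀ * p' / (-Complex.I * (a:ℂ)) = Complex.I * ((-(κ * (a + 1/a) / 2) : ℝ) : ℂ) := by
  have hane : (a:ℂ) ≠ 0 := Complex.ofReal_ne_zero.mpr ha.ne'
  rw [div_eq_iff (by simp [hane, Complex.I_ne_zero])]
  push_cast
  rw [hEq]
  field_simp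
  linear_combination (-((κ:ℝ):ℂ)*(a:ℂ)^2 - ((κ:ℝ):ℂ)) * Complex.I_mul_I

lemma nunokawa_ineq1 (κ mr aa : ℝ) (h : mr ≤ κ) (hpos : 0 < aa) :
    -(κ * aa / 2) ≤ -(mr / 2 * aa) := by nlinarith

lemma nunokawa_ineq2 (mr aa : ℝ) (h2 : 2 ≤ aa) (h1 : 1 ≤ mr) : -(mr / 2 * aa) ≤ -mr := by
  nlinarith
/-- Modified Nunokawa lemma, case `p(z₀) = -i·a`, `a > 0`. -/
theorem nunokawa_case_neg (m : ℕ) (hm : 1 ≤ m) (p : ℂ → ℂ)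
    (hp : DifferentiableOn ℂ p (ball (0:ℂ) 1))
    (hp0 : p 0 = 1)
    (hjder : ∀ j : ℕ, 1 ≤ j → j ≤ m - 1 → iteratedDeriv j p 0 = 0)
    (hmder : iteratedDeriv m p 0 ≠ 0)
    (hpne : ∀ z ∈ ball (0:ℂ) 1, p z ≠ 0)
    (z₀ : ℂ) (hz₀ : z₀ ∈ ball (0:ℂ) 1)
    (hre : ∀ z : ℂ, ‖z‖ < ‖z₀‖ → 0 < (p z).re)
    (hre0 : (p z₀).re = 0) (hpz₀ : p z₀ ≠ 0)
    (a : ℝ) (ha : 0 < a) (hpa : p z₀ = -Complex.I * (a : ℂ)) :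
    ∃ k : ℝ, z₀ * deriv p z₀ / p z₀ = Complex.I * (k : ℂ) ∧
      k ≤ -((m : ℝ) / 2 * (a + 1 / a)) ∧
      -((m : ℝ) / 2 * (a + 1 / a)) ≤ -(m : ℝ) ∧ -(m : ℝ) ≤ (-1 : ℝ) := by
  set R := ‖z₀‖ with hRdef
  have hz₀1 : ‖z₀‖ < 1 := by
    simpa [Complex.dist_eq] using mem_ball.mp hz₀
  have hz₀ne : z₀ ≠ 0 := by
    intro h
    rw [h, hp0] at hre0
    simp at hre0
  have hR : 0 < R := by simpa [hRdef] using hz₀ne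
  have hR1 : R < 1 := hz₀1
  have hmem : ∀ z : ℂ, ‖z‖ ≤ R → z ∈ ball (0:ℂ) 1 := by
    intro z hz
    simp only [mem_ball, Complex.dist_eq, sub_zero]
    exact lt_of_le_of_lt hz hR1
  have hpd : ∀ z ∈ ball (0:ℂ) 1, DifferentiableAt ℂ p z := fun z hz =>
    hp.differentiableAt (isOpen_ball.mem_nhds hz)
  have hpc : ∀ z ∈ ball (0:ℂ) 1, ContinuousAt p z := fun z hz => (hpd z hz).continuousAt
  -- Re p ≥ 0 on the closed ball of radius R
  have hrege : ∀ z : ℂ, ‖z‖ ≤ R → 0 ≤ (p z).re := by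
    intro z hz
    rcases lt_or_eq_of_le hz with h | h
    · exact (hre z h).le
    · have hcont : ContinuousAt p z := hpc z (hmem z hz)
      have h1 : Tendsto (fun t : ℝ => ((t:ℂ) * z)) (𝓝 1) (𝓝 z) := by
        have : Continuous (fun t : ℝ => ((t:ℂ) * z)) :=
          (Complex.continuous_ofReal.mul continuous_const)
        simpa using this.tendsto 1
      have h2 : Tendsto (fun t : ℝ => (p ((t:ℂ) * z)).re) (𝓝[<] (1:ℝ)) (𝓝 (p z).re) :=
        ((Complex.continuous_re.continuousAt.tendsto.comp
          (hcont.tendsto.comp h1))).mono_left nhdsWithin_le_nhds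
      refine ge_of_tendsto h2 ?_
      filter_upwards [Ioo_mem_nhdsLT_of_mem (Set.mem_Ioc.mpr ⟨zero_lt_one, le_refl 1⟩)]
        with t ht
      refine (hre _ ?_).le
      have habs : ‖(t:ℂ) * z‖ = t * R := by
        rw [norm_mul, Complex.norm_real, Real.norm_eq_abs, abs_of_pos ht.1, h]
      rw [habs]
      calc t * R < 1 * R := by exact mul_lt_mul_of_pos_right ht.2 hR
        _ = R := one_mul R
  -- the denominator 1 + p z is nonvanishing on the closed ball
  have hne : ∀ z : ℂ, ‖z‖ ≤ R → 1 + p z ≠ 0 := by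
    intro z hz h
    have h1 : ((1:ℂ) + p z).re = 1 + (p z).re := by simp
    rw [h] at h1
    simp only [Complex.zero_re] at h1
    linarith [hrege z hz]
  -- the Cayley-type transform
  set w : ℂ → ℂ := fun z => (1 - p z) / (1 + p z) with hwdef
  have hw0 : w 0 = 0 := by simp [hwdef, hp0]
  have hwle : ∀ z : ℂ, ‖z‖ ≤ R → ‖w z‖ ≤ 1 := by
    intro z hz
    have h1 : Complex.normSq (1 - p z) ≤ Complex.normSq (1 + p z) := by
      simp only [Complex.normSq_apply, Complex.add_re, Complex.add_im, Complex.sub_re,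
        Complex.sub_im, Complex.one_re, Complex.one_im]
      nlinarith [hrege z hz]
    have h2 : ‖1 - p z‖ ≤ ‖1 + p z‖ := by
      rw [Complex.norm_def, Complex.norm_def]
      exact Real.sqrt_le_sqrt h1
    rw [hwdef]
    simp only [norm_div]
    exact div_le_one_of_le₀ h2 (norm_nonneg _)
  have hwd : ∀ z : ℂ, ‖z‖ ≤ R → DifferentiableAt ℂ w z := by
    intro z hz
    have hpz := hpd z (hmem z hz)
    exact ((differentiableAt_const _).sub hpz).div ((differentiableAt_const _).add hpz)
      (hne z hz)
  -- analytic factorization of w at 0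
  have hpan : AnalyticAt ℂ p 0 := (hp.analyticOnNhd isOpen_ball) 0 (mem_ball_self one_pos)
  have hqan : AnalyticAt ℂ (fun z => p z - 1) 0 := hpan.sub analyticAt_const
  have hderq : ∀ j : ℕ, 1 ≤ j → iteratedDeriv j (fun z => p z - 1) 0 = iteratedDeriv j p 0 := by
    intro j hj
    obtain ⟨j', rfl⟩ := Nat.exists_eq_succ_of_ne_zero (by omega : j ≠ 0)
    rw [iteratedDeriv_succ', iteratedDeriv_succ']
    congr 1
    funext z
    exact deriv_sub_const 1
  have hqder : ∀ j < m, iteratedDeriv j (fun z => p z - 1) 0 = 0 := by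
    intro j hj
    rcases Nat.eq_zero_or_pos j with h | h
    · subst h; simp [iteratedDeriv_zero, hp0]
    · rw [hderq j h]; exact hjder j h (by omega)
  have hqm : iteratedDeriv m (fun z => p z - 1) 0 ≠ 0 := by
    rw [hderq m hm]; exact hmder
  obtain ⟨Gq, hGqan, hGq⟩ := nunokawa_factor m _ hqan hqder hqm
  have hGan : AnalyticAt ℂ (fun z => -Gq z / (1 + p z)) 0 :=
    (hGqan.neg).div (analyticAt_const.add hpan) (by rw [hp0]; norm_num)
  set G : ℂ → ℂ := fun z => -Gq z / (1 + p z) with hGdef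
  have hwG : ∀ᶠ z in 𝓝 0, w z = z ^ m * G z := by
    filter_upwards [hGq] with z hz
    have h1 : w z = -(p z - 1) / (1 + p z) := by rw [hwdef]; ring_nf
    rw [h1, hz, hGdef]; ring
  classical
  set g : ℂ → ℂ := fun z => if z = 0 then G 0 else w z / z ^ m with hgdef
  have hgeq : ∀ z : ℂ, z ≠ 0 → w z = z ^ m * g z := by
    intro z hz
    simp only [hgdef, if_neg hz]
    field_simp
  have hgG : g =ᶠ[𝓝 0] G := by
    filter_upwards [hwG] with z hz
    by_cases h : z = 0
    · simp [hgdef, h]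
    · simp only [hgdef, if_neg h]
      rw [hz]
      field_simp
  have hgd : DifferentiableOn ℂ g (ball 0 R) := by
    intro z hz
    apply DifferentiableAt.differentiableWithinAt
    by_cases h : z = 0
    · subst h
      exact hGan.differentiableAt.congr_of_eventuallyEq hgG
    · have hz' : ‖z‖ ≤ R :=
        le_of_lt (by simpa [Complex.dist_eq] using mem_ball.mp hz)
      have hd : DifferentiableAt ℂ (fun z' => w z' / z' ^ m) z :=
        (hwd z hz').div (differentiableAt_pow m) (pow_ne_zero m h)
      refine hd.congr_of_eventuallyEq ?_
      filter_upwards [compl_singleton_mem_nhds h] with z' hz''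
      have h2 : z' ≠ 0 := hz''
      simp only [hgdef, if_neg h2]
  have hgb : ∀ z : ℂ, ‖z‖ < R → ‖g z‖ ≤ 1 / R ^ m := by
    intro z hz
    have key : ∀ t : ℝ, t ∈ Set.Ioo (‖z‖) R → ‖g z‖ ≤ 1 / t ^ m := by
      intro t ht
      have ht0 : 0 < t := lt_of_le_of_lt (norm_nonneg z) ht.1
      have hsub : closedBall (0:ℂ) t ⊆ ball 0 R := closedBall_subset_ball ht.2
      have hdc : DiffContOnCl ℂ g (ball (0:ℂ) t) :=
        ⟨hgd.mono (ball_subset_ball ht.2.le),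
         (hgd.continuousOn).mono (by rw [closure_ball (0:ℂ) ht0.ne']; exact hsub)⟩
      refine Complex.norm_le_of_forall_mem_frontier_norm_le isBounded_ball hdc ?_ ?_
      · intro z' hz'
        rw [frontier_ball (0:ℂ) ht0.ne'] at hz'
        have habs' : ‖z'‖ = t := by
          simpa [Complex.dist_eq] using hz'
        have hz'ne : z' ≠ 0 := by
          intro hcon
          rw [hcon] at habs'
          simp at habs'
          exact ht0.ne' habs'.symm
        have hz'R : ‖z'‖ ≤ R := by rw [habs']; exact ht.2.le
        have hval : ‖g z'‖ = ‖w z'‖ / t ^ m := by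
          simp only [hgdef, if_neg hz'ne, norm_div, norm_pow, habs']
        rw [hval]
        have hb := hwle z' hz'R
        gcongr
      · rw [closure_ball (0:ℂ) ht0.ne']
        simpa [mem_closedBall, Complex.dist_eq, sub_zero] using ht.1.le
    have hcont : ContinuousAt (fun t : ℝ => 1 / t ^ m) R :=
      ContinuousAt.div continuousAt_const ((continuous_pow m).continuousAt)
        (pow_ne_zero m hR.ne')
    have htend : Tendsto (fun t : ℝ => 1 / t ^ m) (𝓝[<] R) (𝓝 (1 / R ^ m)) :=
      Tendsto.mono_left hcont nhdsWithin_le_nhds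
    refine ge_of_tendsto htend ?_
    filter_upwards [Ioo_mem_nhdsLT_of_mem (Set.mem_Ioc.mpr ⟨hz, le_refl R⟩)] with t ht
    exact key t ht
  have hwb : ∀ t : ℝ, 0 < t → t < 1 → ‖w ((t:ℂ) * z₀)‖ ≤ t ^ m := by
    intro t ht0 ht1
    have habs : ‖(t:ℂ) * z₀‖ = t * R := by
      rw [norm_mul, Complex.norm_real, Real.norm_eq_abs, abs_of_pos ht0]
    have hlt : ‖(t:ℂ) * z₀‖ < R := by rw [habs]; nlinarith
    have hne0 : (t:ℂ) * z₀ ≠ 0 :=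
      mul_ne_zero (by exact_mod_cast ht0.ne') hz₀ne
    rw [hgeq _ hne0, norm_mul, norm_pow, habs]
    calc (t*R)^m * ‖g ((t:ℂ)*z₀)‖ ≤ (t*R)^m * (1/R^m) := by
          exact mul_le_mul_of_nonneg_left (hgb _ hlt) (pow_nonneg (by nlinarith) m)
      _ = t^m := by rw [mul_pow]; field_simp
  -- values at z₀
  have hz₀R : ‖z₀‖ ≤ R := le_of_eq hRdef.symm
  have hIa1 : (1:ℂ) + Complex.I * a ≠ 0 := by
    intro h
    have h2 := congrArg Complex.re h
    simp at h2
  have hIa2 : (1:ℂ) - Complex.I * a ≠ 0 := by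
    intro h
    have h2 := congrArg Complex.re h
    simp at h2
  have hp₀1 : 1 - p z₀ = 1 + Complex.I * a := by rw [hpa]; ring
  have hp₀2 : 1 + p z₀ = 1 - Complex.I * a := by rw [hpa]; ring
  have hwz₀ : w z₀ = (1 + Complex.I*a) / (1 - Complex.I*a) := by
    rw [hwdef]; simp only; rw [hp₀1, hp₀2]
  have hnseq : Complex.normSq (1 + Complex.I*a) = Complex.normSq (1 - Complex.I*a) := by
    simp [Complex.normSq_apply]
  have hwz₀abs : ‖w z₀‖ = 1 := by
    rw [hwz₀, norm_div, Complex.norm_def, Complex.norm_def, hnseq, div_self]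
    exact Real.sqrt_ne_zero'.mpr (Complex.normSq_pos.mpr hIa2)
  have hwnormSq : Complex.normSq (w z₀) = 1 := by
    rw [← Complex.sq_norm, hwz₀abs]; norm_num
  have hconjw : (starRingEnd ℂ) (w z₀) * w z₀ = 1 := by
    rw [mul_comm, Complex.mul_conj, hwnormSq]; norm_num
  -- derivative of w at z₀
  have hpder : HasDerivAt p (deriv p z₀) z₀ := (hpd z₀ hz₀).hasDerivAt
  set p' := deriv p z₀ with hp'def
  set D := (-p' * (1 + p z₀) - (1 - p z₀) * p') / ((1 + p z₀) ^ 2) with hDdef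
  have hwder : HasDerivAt w D z₀ := by
    have h1 : HasDerivAt (fun z => 1 - p z) (-p') z₀ := hpder.const_sub 1
    have h2 : HasDerivAt (fun z => 1 + p z) p' z₀ := hpder.const_add 1
    exact h1.div h2 (hne z₀ hz₀R)
  -- Part A: the imaginary part of k₀ vanishes
  have hIm : (z₀ * D * (starRingEnd ℂ) (w z₀)).im = 0 := by
    have hinner : HasDerivAt (fun θ : ℝ => (θ:ℂ) * Complex.I) Complex.I 0 := by
      simpa using (Complex.ofRealCLM.hasDerivAt (x := (0:ℝ))).mul_const Complex.I
    have hexp : HasDerivAt (fun θ : ℝ => Complex.exp ((θ:ℂ) * Complex.I)) Complex.I 0 := by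
      have h4 := (Complex.hasDerivAt_exp 0).scomp_of_eq 0 hinner (by norm_num)
      simp at h4
      exact h4
    have hc : HasDerivAt (fun θ : ℝ => z₀ * Complex.exp ((θ:ℂ) * Complex.I)) (z₀ * Complex.I) 0 := by
      simpa using hexp.const_mul z₀
    have hW : HasDerivAt (fun θ : ℝ => w (z₀ * Complex.exp ((θ:ℂ) * Complex.I)))
        ((z₀ * Complex.I) • D) 0 := by
      have := hwder.scomp_of_eq 0 hc (by simp)
      simp [Function.comp] at this
      exact this
    have hWc : HasDerivAt (fun θ : ℝ => (starRingEnd ℂ) (w (z₀ * Complex.exp ((θ:ℂ) * Complex.I))))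
        ((starRingEnd ℂ) ((z₀ * Complex.I) • D)) 0 := by
      have h5 := (Complex.conjCLE.toContinuousLinearMap.hasFDerivAt).comp_hasDerivAt 0 hW
      simp at h5
      rw [show (starRingEnd ℂ) ((z₀ * Complex.I) • D) = -((starRingEnd ℂ) z₀ * Complex.I * (starRingEnd ℂ) D) by simp]
      exact h5
    have hprod := hW.mul hWc
    have hχ := (Complex.reCLM.hasFDerivAt).comp_hasDerivAt 0 hprod
    have hmax : IsLocalMax (fun θ : ℝ =>
        (w (z₀ * Complex.exp ((θ:ℂ) * Complex.I)) *
          (starRingEnd ℂ) (w (z₀ * Complex.exp ((θ:ℂ) * Complex.I)))).re) 0 := by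
      apply Filter.Eventually.of_forall
      intro θ
      dsimp only
      have habsθ : ‖z₀ * Complex.exp ((θ:ℂ) * Complex.I)‖ = R := by
        rw [norm_mul, Complex.norm_exp_ofReal_mul_I, mul_one]
      have hb := hwle _ (le_of_eq habsθ)
      have h6 : ∀ ζ : ℂ, (ζ * (starRingEnd ℂ) ζ).re = Complex.normSq ζ := by
        intro ζ; rw [Complex.mul_conj]; simp
      rw [h6, h6]
      have h12 : z₀ * Complex.exp (((0:ℝ):ℂ) * Complex.I) = z₀ := by simp
      rw [show ((0:ℝ):ℂ) = ((0:ℝ):ℂ) from rfl] at h12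
      rw [Complex.ofReal_zero] at h12 ⊢
      rw [h12, hwnormSq]
      rw [← Complex.sq_norm]
      nlinarith [norm_nonneg (w (z₀ * Complex.exp ((θ:ℂ) * Complex.I)))]
    have h9 : z₀ * Complex.exp (((0:ℝ):ℂ) * Complex.I) = z₀ := by simp
    have hχ' : HasDerivAt (fun θ : ℝ => (w (z₀ * Complex.exp ((θ:ℂ) * Complex.I)) *
          (starRingEnd ℂ) (w (z₀ * Complex.exp ((θ:ℂ) * Complex.I)))).re)
        ((((z₀ * Complex.I) • D) * (starRingEnd ℂ) (w z₀)
          + w z₀ * (starRingEnd ℂ) ((z₀ * Complex.I) • D)).re) 0 := by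
      rw [h9] at hχ
      exact hχ
    have hd0 : (((z₀ * Complex.I) • D) * (starRingEnd ℂ) (w z₀)
        + w z₀ * (starRingEnd ℂ) ((z₀ * Complex.I) • D)).re = 0 := by
      rw [← hχ'.deriv]
      exact hmax.deriv_eq_zero
    have h10 : (((z₀ * Complex.I) • D) * (starRingEnd ℂ) (w z₀)
        + w z₀ * (starRingEnd ℂ) ((z₀ * Complex.I) • D)).re
        = -2 * (z₀ * D * (starRingEnd ℂ) (w z₀)).im := by
      simp [smul_eq_mul, Complex.add_re, Complex.mul_re, Complex.mul_im,
        Complex.conj_re, Complex.conj_im, Complex.I_re, Complex.I_im]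
      ring
    rw [h10] at hd0
    linarith
  -- Part B: the real part of k₀ is at least m
  have hRe : (m:ℝ) ≤ (z₀ * D * (starRingEnd ℂ) (w z₀)).re := by
    have hinner : HasDerivAt (fun t : ℝ => (t:ℂ) * z₀) z₀ 1 := by
      simpa using (Complex.ofRealCLM.hasDerivAt (x := (1:ℝ))).mul_const z₀
    have hone : ((1:ℝ):ℂ) * z₀ = z₀ := by simp
    have hW : HasDerivAt (fun t : ℝ => w ((t:ℂ) * z₀)) (z₀ • D) 1 := by
      have := hwder.scomp_of_eq 1 hinner (by simp)
      simp [Function.comp] at this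
      exact this
    have hWm := hW.mul_const ((starRingEnd ℂ) (w z₀))
    have hψ := (Complex.reCLM.hasFDerivAt).comp_hasDerivAt 1 hWm
    have hψ' : HasDerivAt (fun t : ℝ => (w ((t:ℂ) * z₀) * (starRingEnd ℂ) (w z₀)).re)
        ((z₀ * D * (starRingEnd ℂ) (w z₀)).re) 1 := by
      have hval : Complex.reCLM (z₀ • D * (starRingEnd ℂ) (w z₀))
          = (z₀ * D * (starRingEnd ℂ) (w z₀)).re := by
        simp [smul_eq_mul]
      rw [← hval]
      exact hψ
    have hψ1 : (w (((1:ℝ):ℂ) * z₀) * (starRingEnd ℂ) (w z₀)).re = 1 := by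
      rw [hone, Complex.mul_conj, hwnormSq]
      norm_num
    have hslope := hasDerivAt_iff_tendsto_slope.mp hψ'
    have hslope' : Tendsto (slope (fun t : ℝ => (w ((t:ℂ) * z₀) * (starRingEnd ℂ) (w z₀)).re) 1)
        (𝓝[<] (1:ℝ)) (𝓝 ((z₀ * D * (starRingEnd ℂ) (w z₀)).re)) :=
      hslope.mono_left (nhdsWithin_mono 1 fun x hx => ne_of_lt hx)
    have hlow : Tendsto (fun t : ℝ => (m:ℝ) * t ^ (m-1)) (𝓝[<] (1:ℝ)) (𝓝 (m:ℝ)) := by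
      have hcont : Tendsto (fun t : ℝ => (m:ℝ) * t ^ (m-1)) (𝓝 1) (𝓝 ((m:ℝ) * 1 ^ (m-1))) :=
        ((continuous_const.mul (continuous_pow (m-1))).tendsto 1)
      simpa using hcont.mono_left nhdsWithin_le_nhds
    refine le_of_tendsto_of_tendsto hlow hslope' ?_
    filter_upwards [Ioo_mem_nhdsLT_of_mem (Set.mem_Ioc.mpr ⟨zero_lt_one, le_refl (1:ℝ)⟩)]
      with t ht
    have ht0 : 0 < t := ht.1
    have ht1 : t < 1 := ht.2
    have hψt : (w ((t:ℂ) * z₀) * (starRingEnd ℂ) (w z₀)).re ≤ t ^ m := by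
      calc (w ((t:ℂ) * z₀) * (starRingEnd ℂ) (w z₀)).re
          ≤ ‖w ((t:ℂ) * z₀) * (starRingEnd ℂ) (w z₀)‖ := Complex.re_le_norm _
        _ = ‖w ((t:ℂ) * z₀)‖ := by
            rw [norm_mul, Complex.norm_conj, hwz₀abs, mul_one]
        _ ≤ t ^ m := hwb t ht0 ht1
    show (m:ℝ) * t ^ (m-1) ≤ _
    rw [slope_def_field]
    rw [le_div_iff_of_neg (by linarith : t - 1 < 0)]
    have hkey := nunokawa_geom m t ht0.le ht1.le
    rw [hψ1]
    nlinarith [hkey, hψt]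
  -- final assembly
  set κ := (z₀ * D * (starRingEnd ℂ) (w z₀)).re with hκdef
  have hk₀ : z₀ * D * (starRingEnd ℂ) (w z₀) = ((κ:ℝ) : ℂ) := by
    apply Complex.ext
    · simp [hκdef]
    · simp [hIm]
  have hconjwz₀ : (starRingEnd ℂ) (w z₀) = (1 - Complex.I*a) / (1 + Complex.I*a) := by
    rw [hwz₀, map_div₀]
    congr 1 <;> simp [map_add, map_sub, map_mul, Complex.conj_I, Complex.conj_ofReal, sub_eq_add_neg]
  have hD2 : D = -2*p'/((1 - Complex.I*a)^2) := by
    rw [hDdef, hp₀1, hp₀2]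
    congr 1
    ring
  have hk₀' : z₀ * (-2*p'/((1 - Complex.I*a)^2)) * ((1 - Complex.I*a)/(1 + Complex.I*a))
      = ((κ:ℝ) : ℂ) := by
    rw [← hD2, ← hconjwz₀]
    exact hk₀
  have hprod : ((1:ℂ) - Complex.I*a)*(1 + Complex.I*a) = 1 + (a:ℂ)^2 := by
    linear_combination (-(a:ℂ)^2) * Complex.I_mul_I
  have hEq : z₀ * p' = -((κ:ℝ):ℂ) * (1 + (a:ℂ)^2) / 2 := by
    field_simp at hk₀'
    have hmul : ((1:ℂ) - Complex.I*a) * (z₀ * (-2*p'))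
        = ((1:ℂ) - Complex.I*a) * (((κ:ℝ):ℂ) * ((1 - Complex.I*a)*(1 + Complex.I*a))) := by
      linear_combination (1 - Complex.I*a) * hk₀'
    have hmul' := mul_left_cancel₀ hIa2 hmul
    linear_combination (-1/2 : ℂ) * hmul' + (-((κ:ℝ):ℂ)/2) * hprod
  have hane : (a:ℂ) ≠ 0 := Complex.ofReal_ne_zero.mpr ha.ne'
  have h2a : (2:ℝ) ≤ a + 1/a := by
    have hid : (a + 1/a - 2) * a = (a-1)^2 := by field_simp; ring
    nlinarith [hid, ha, sq_nonneg (a-1)]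
  have hapos : 0 < a + 1/a := by positivity
  have hm' : (1:ℝ) ≤ (m:ℝ) := by exact_mod_cast hm
  refine ⟨-(κ * (a + 1/a) / 2), ?_, ?_, ?_, ?_⟩
  · rw [hpa]
    exact nunokawa_alg z₀ p' κ a ha hEq
  · exact nunokawa_ineq1 κ (m:ℝ) (a + 1/a) hRe hapos
  · exact nunokawa_ineq2 (m:ℝ) (a + 1/a) h2a hm'
  · exact neg_le_neg hm'
end

section
/- Let f be analytic in the open unit disc Δ = {z ∈ ℂ : |z| < 1} with f(0) = 0 and f′(0) = 1, and suppose f(z) ≠ 0 for all z ∈ Δ with z ≠ 0. If Re(z·f′(z)/f(z)) < 3/2 for all z ∈ Δ with z ≠ 0, then Re(z/f(z)) > 1/2 for all z ∈ Δ with z ≠ 0. -/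
open Complex Metric Set Filter Topology

/-- Derivative of `t ↦ normSq (W t)` for a real-parametrized complex curve. -/
lemma hasDerivAt_normSq_comp {W : ℝ → ℂ} {d : ℂ} {t : ℝ} (h : HasDerivAt W d t) :
    HasDerivAt (fun s => Complex.normSq (W s))
      (2 * ((W t).re * d.re + (W t).im * d.im)) t := by
  have hre : HasDerivAt (fun s => (W s).re) d.re t := by
    simpa [Function.comp_def] using Complex.reCLM.hasFDerivAt.comp_hasDerivAt t h
  have him : HasDerivAt (fun s => (W s).im) d.im t := by
    simpa [Function.comp_def] using Complex.imCLM.hasFDerivAt.comp_hasDerivAt t h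
  have h2 : HasDerivAt (fun s => (W s).re * (W s).re + (W s).im * (W s).im) _ t :=
    (hre.mul hre).add (him.mul him)
  simp only [Complex.normSq_apply]
  convert h2 using 1
  ring

set_option maxHeartbeats 1000000 in
/-- A Jack-lemma style result: if `w` is analytic on the unit ball, `w 0 = 0`,
`1 + w` never vanishes, and `Re (z w'(z)/(1+w z)) < 1/2` off the origin, then `‖w‖ < 1`. -/
lemma jack_bound {w : ℂ → ℂ} (hw : DifferentiableOn ℂ w (ball (0:ℂ) 1)) (hw0 : w 0 = 0)
    (hne : ∀ z ∈ ball (0:ℂ) 1, 1 + w z ≠ 0)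
    (hcond : ∀ z ∈ ball (0:ℂ) 1, z ≠ 0 → (z * deriv w z / (1 + w z)).re < 1/2) :
    ∀ z ∈ ball (0:ℂ) 1, ‖w z‖ < 1 := by
  by_contra hcon
  push_neg at hcon
  obtain ⟨z1, hz1, hwz1⟩ := hcon
  rw [mem_ball, dist_zero_right] at hz1
  have hCsub : closedBall (0:ℂ) ‖z1‖ ⊆ ball (0:ℂ) 1 := closedBall_subset_ball hz1
  have hwc : ContinuousOn w (closedBall (0:ℂ) ‖z1‖) := (hw.mono hCsub).continuousOn
  set K : Set ℂ := closedBall (0:ℂ) ‖z1‖ ∩ (fun z => ‖w z‖) ⁻¹' (Ici 1) with hK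
  have hKclosed : IsClosed K :=
    (hwc.norm).preimage_isClosed_of_isClosed isClosed_closedBall isClosed_Ici
  have hKcpt : IsCompact K :=
    (isCompact_closedBall _ _).of_isClosed_subset hKclosed inter_subset_left
  have hKne : K.Nonempty := ⟨z1, by
    refine ⟨by simp [mem_closedBall, dist_zero_right], ?_⟩
    simpa using hwz1⟩
  obtain ⟨z0, hz0K, hz0min⟩ := hKcpt.exists_isMinOn hKne continuous_norm.continuousOn
  have hz0le : ‖z0‖ ≤ ‖z1‖ := by simpa [mem_closedBall, dist_zero_right] using hz0K.1
  have hsmall : ∀ z : ℂ, ‖z‖ < ‖z0‖ → ‖w z‖ < 1 := by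
    intro z hz
    by_contra hge
    push_neg at hge
    have hzK : z ∈ K := ⟨by
      simpa [mem_closedBall, dist_zero_right] using le_trans hz.le hz0le, hge⟩
    exact absurd (hz0min hzK) (by simpa using hz)
  have hseg : ContinuousOn (fun t : ℝ => ‖w ((t:ℂ) * z0)‖) (Icc (0:ℝ) 1) := by
    apply ContinuousOn.norm
    apply hwc.comp (by fun_prop)
    intro t ht
    simp only [mem_closedBall, dist_zero_right, norm_mul, Complex.norm_real]
    calc |t| * ‖z0‖ ≤ 1 * ‖z0‖ := by
          apply mul_le_mul_of_nonneg_right _ (norm_nonneg _)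
          rw [abs_le]; exact ⟨by linarith [ht.1], ht.2⟩
      _ ≤ ‖z1‖ := by simpa using hz0le
  have h01 : (1:ℝ) ∈ Icc ‖w (((0:ℝ):ℂ) * z0)‖ ‖w (((1:ℝ):ℂ) * z0)‖ := by
    constructor
    · simp [hw0]
    · simpa using hz0K.2
  obtain ⟨t, ht01, htval⟩ := intermediate_value_Icc zero_le_one hseg h01
  set c : ℂ := (t:ℂ) * z0 with hc
  have hwcnorm : ‖w c‖ = 1 := htval
  have hcle : ‖c‖ ≤ ‖z0‖ := by
    simp only [hc, norm_mul, Complex.norm_real]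
    calc |t| * ‖z0‖ ≤ 1 * ‖z0‖ := by
          apply mul_le_mul_of_nonneg_right _ (norm_nonneg _)
          rw [abs_le]; exact ⟨by linarith [ht01.1], ht01.2⟩
      _ = ‖z0‖ := one_mul _
  have hcball : c ∈ ball (0:ℂ) 1 := by
    rw [mem_ball, dist_zero_right]; exact lt_of_le_of_lt hcle (lt_of_le_of_lt hz0le hz1)
  have hc0 : c ≠ 0 := by
    intro h
    rw [h, hw0] at hwcnorm
    simp at hwcnorm
  have hr0 : 0 < ‖c‖ := norm_pos_iff.mpr hc0
  set r : ℝ := ‖c‖ with hrdef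
  have hr1 : r < 1 := by
    have := mem_ball.mp hcball
    simpa [dist_zero_right] using this
  have hlt : ∀ z : ℂ, ‖z‖ < r → ‖w z‖ < 1 := fun z hz =>
    hsmall z (lt_of_lt_of_le hz hcle)
  have hballsub : ball (0:ℂ) r ⊆ ball (0:ℂ) 1 := ball_subset_ball (le_of_lt hr1)
  have hwr : DifferentiableOn ℂ w (ball (0:ℂ) r) := hw.mono hballsub
  -- Schwarz: ‖w z‖ ≤ ‖z‖ / r on ball 0 r
  have hschwarz : ∀ z : ℂ, ‖z‖ < r → ‖w z‖ ≤ ‖z‖ / r := by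
    intro z hz
    have hzball : z ∈ ball (0:ℂ) r := by rwa [mem_ball, dist_zero_right]
    have key : ∀ R : ℝ, 1 < R → ‖w z‖ ≤ R / r * ‖z‖ := by
      intro R hR
      have hmaps : MapsTo w (ball (0:ℂ) r) (ball (w 0) R) := by
        intro x hx
        rw [mem_ball, hw0, dist_zero_right]
        exact lt_trans (hlt x (by rwa [mem_ball, dist_zero_right] at hx)) hR
      have := Complex.dist_le_div_mul_dist_of_mapsTo_ball hwr (hmaps.mono_right ball_subset_closedBall) hzball
      rwa [hw0, dist_zero_right, dist_zero_right] at this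
    have htend : Tendsto (fun R : ℝ => R / r * ‖z‖) (𝓝[>] (1:ℝ)) (𝓝 (1 / r * ‖z‖)) := by
      apply Tendsto.mono_left _ nhdsWithin_le_nhds
      exact (Filter.Tendsto.div_const tendsto_id r).mul_const ‖z‖
    have hle : ‖w z‖ ≤ 1 / r * ‖z‖ := by
      refine ge_of_tendsto htend ?_
      filter_upwards [self_mem_nhdsWithin] with R hR
      exact key R hR
    calc ‖w z‖ ≤ 1 / r * ‖z‖ := hle
      _ = ‖z‖ / r := by ring
  -- continuity-extended bound
  have hle1 : ∀ z : ℂ, ‖z‖ ≤ r → ‖w z‖ ≤ 1 := by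
    intro z hz
    rcases eq_or_ne z 0 with rfl | hz0
    · simp [hw0]
    have hzball : z ∈ ball (0:ℂ) 1 := by
      rw [mem_ball, dist_zero_right]; exact lt_of_le_of_lt hz hr1
    have hwcont : ContinuousAt w z :=
      (hw.differentiableAt (isOpen_ball.mem_nhds hzball)).continuousAt
    have htend : Tendsto (fun s : ℝ => ‖w ((s:ℂ) * z)‖) (𝓝[<] (1:ℝ)) (𝓝 ‖w z‖) := by
      have h1 : Tendsto (fun s : ℝ => (s:ℂ) * z) (𝓝[<] (1:ℝ)) (𝓝 z) := by
        have h2 : Tendsto (fun s : ℝ => (s:ℂ) * z) (𝓝 (1:ℝ)) (𝓝 z) := by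
          have := (Complex.continuous_ofReal.tendsto (1:ℝ)).mul_const z
          simpa using this
        exact h2.mono_left nhdsWithin_le_nhds
      exact (hwcont.tendsto.comp h1).norm
    refine le_of_tendsto htend ?_
    filter_upwards [Ioo_mem_nhdsLT_of_mem (by constructor <;> norm_num : (1:ℝ) ∈ Ioc (0:ℝ) 1)]
      with s hs
    have hsz : ‖(s:ℂ) * z‖ < r := by
      rw [norm_mul, Complex.norm_real, Real.norm_eq_abs, abs_of_pos hs.1]
      have hzpos : 0 < ‖z‖ := norm_pos_iff.mpr hz0
      nlinarith [hs.2, hz]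
    have hb1 : ‖w ((s:ℂ) * z)‖ ≤ ‖(s:ℂ) * z‖ / r := hschwarz _ hsz
    have hb2 : ‖(s:ℂ) * z‖ / r ≤ 1 := by rw [div_le_one hr0]; exact hsz.le
    linarith
  have hns1 : Complex.normSq (w c) = 1 := by
    rw [Complex.normSq_eq_norm_sq, hwcnorm]; norm_num
  have hwdiff : HasDerivAt w (deriv w c) c :=
    (hw.differentiableAt (isOpen_ball.mem_nhds hcball)).hasDerivAt
  -- radial derivative: Re k ≥ 1, with k = conj (w c) * (c * deriv w c)
  have hkre : 1 ≤ ((starRingEnd ℂ (w c)) * (c * deriv w c)).re := by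
    have hmul : HasDerivAt (fun u : ℂ => u * c) c 1 := by
      simpa using (hasDerivAt_id (1:ℂ)).mul_const c
    have h1c : HasDerivAt w (deriv w c) ((1:ℂ) * c) := by rwa [one_mul]
    have hcomp : HasDerivAt (fun u : ℂ => w (u * c)) (deriv w c * c) 1 := by
      have := HasDerivAt.comp (1:ℂ) h1c hmul
      simpa [Function.comp_def] using this
    have hW : HasDerivAt (fun s : ℝ => w ((s:ℂ) * c)) (deriv w c * c) 1 := by
      have := hcomp.comp_ofReal (z := (1:ℝ))
      simpa using this
    have hphi := hasDerivAt_normSq_comp hW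
    rw [show (((1:ℝ):ℂ) * c) = c by norm_num] at hphi
    set D : ℝ := 2 * ((w c).re * (deriv w c * c).re + (w c).im * (deriv w c * c).im) with hD
    have hDk : D = 2 * ((starRingEnd ℂ (w c)) * (c * deriv w c)).re := by
      simp only [hD, Complex.mul_re, Complex.mul_im, Complex.conj_re, Complex.conj_im]
      ring
    have hslope : Tendsto (slope (fun s : ℝ => Complex.normSq (w ((s:ℂ) * c))) 1)
        (𝓝[<] (1:ℝ)) (𝓝 D) :=
      (hasDerivAt_iff_tendsto_slope.mp hphi).mono_left
        (nhdsWithin_mono 1 (fun x hx => ne_of_lt hx))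
    have hphis : ∀ s : ℝ, s ∈ Ioo (0:ℝ) 1 → Complex.normSq (w ((s:ℂ) * c)) ≤ s^2 := by
      intro s hs
      have hsc : ‖(s:ℂ) * c‖ < r := by
        rw [norm_mul, Complex.norm_real, Real.norm_eq_abs, abs_of_pos hs.1]
        nlinarith [hs.2, hr0]
      have h1 : ‖w ((s:ℂ) * c)‖ ≤ s := by
        have h2 := hschwarz _ hsc
        rw [norm_mul, Complex.norm_real, Real.norm_eq_abs, abs_of_pos hs.1] at h2
        calc ‖w ((s:ℂ) * c)‖ ≤ s * r / r := by
              rw [hrdef] at h2 ⊢; exact h2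
          _ = s := by field_simp
      calc Complex.normSq (w ((s:ℂ) * c)) = ‖w ((s:ℂ) * c)‖^2 := by
            rw [Complex.normSq_eq_norm_sq]
        _ ≤ s^2 := by
            apply pow_le_pow_left₀ (norm_nonneg _) h1
    have hphi1 : Complex.normSq (w (((1:ℝ):ℂ) * c)) = 1 := by
      rw [show (((1:ℝ):ℂ) * c) = c by norm_num]; exact hns1
    have hD2 : 2 ≤ D := by
      have htend2 : Tendsto (fun s : ℝ => 1 + s) (𝓝[<] (1:ℝ)) (𝓝 (2:ℝ)) := by
        have h3 : Tendsto (fun s : ℝ => 1 + s) (𝓝 (1:ℝ)) (𝓝 (2:ℝ)) := by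
          have := (tendsto_const_nhds (x := (1:ℝ)) (f := 𝓝 (1:ℝ))).add tendsto_id
          simpa [one_add_one_eq_two] using this
        exact h3.mono_left nhdsWithin_le_nhds
      refine le_of_tendsto_of_tendsto htend2 hslope ?_
      filter_upwards [Ioo_mem_nhdsLT_of_mem (by constructor <;> norm_num : (1:ℝ) ∈ Ioc (0:ℝ) 1)]
        with s hs
      have hs1 : s - 1 < 0 := by linarith [hs.2]
      have h1 := hphis s hs
      beta_reduce
      rw [slope_def_field, le_div_iff_of_neg hs1]
      have h2 : Complex.normSq (w (((1:ℝ):ℂ) * c)) = 1 := hphi1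
      have hc1 : ((1:ℝ):ℂ) = (1:ℂ) := by norm_num
      rw [hc1, one_mul] at h2
      nlinarith [h1]
    linarith [hDk ▸ hD2]
  -- tangential derivative: Im k = 0
  have hkim : ((starRingEnd ℂ (w c)) * (c * deriv w c)).im = 0 := by
    have hexp : HasDerivAt (fun u : ℂ => c * Complex.exp (u * I)) (c * I) 0 := by
      have h1 : HasDerivAt (fun u : ℂ => u * I) I 0 := by
        simpa using (hasDerivAt_id (0:ℂ)).mul_const I
      have h2 : HasDerivAt Complex.exp (Complex.exp ((0:ℂ) * I)) ((0:ℂ) * I) :=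
        Complex.hasDerivAt_exp _
      have h3 := HasDerivAt.comp (0:ℂ) h2 h1
      have h4 := h3.const_mul c
      simpa [Function.comp] using h4
    have hcomp : HasDerivAt (fun u : ℂ => w (c * Complex.exp (u * I)))
        (deriv w c * (c * I)) 0 := by
      have h5 : HasDerivAt w (deriv w c) (c * Complex.exp ((0:ℂ) * I)) := by
        simpa using hwdiff
      have := HasDerivAt.comp (0:ℂ) h5 hexp
      simpa [Function.comp_def] using this
    have hW : HasDerivAt (fun θ : ℝ => w (c * Complex.exp ((θ:ℂ) * I)))
        (deriv w c * (c * I)) 0 := by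
      have := hcomp.comp_ofReal (z := (0:ℝ))
      simpa using this
    have hpsi := hasDerivAt_normSq_comp hW
    have hmax : IsLocalMax (fun θ : ℝ => Complex.normSq (w (c * Complex.exp ((θ:ℂ) * I)))) 0 := by
      apply Filter.Eventually.of_forall
      intro θ
      have hnorm : ‖c * Complex.exp ((θ:ℂ) * I)‖ = r := by
        rw [norm_mul, Complex.norm_exp_ofReal_mul_I, mul_one]
      have h1 : ‖w (c * Complex.exp ((θ:ℂ) * I))‖ ≤ 1 := hle1 _ (le_of_eq hnorm)
      have h2 : c * Complex.exp (((0:ℝ):ℂ) * I) = c := by norm_num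
      simp only [h2]
      calc Complex.normSq (w (c * Complex.exp ((θ:ℂ) * I)))
          = ‖w (c * Complex.exp ((θ:ℂ) * I))‖^2 := by
            rw [Complex.normSq_eq_norm_sq]
        _ ≤ 1 := by nlinarith [norm_nonneg (w (c * Complex.exp ((θ:ℂ) * I)))]
        _ = Complex.normSq (w c) := hns1.symm
    have hzero := hmax.hasDerivAt_eq_zero hpsi
    have h0c : w (c * Complex.exp (((0:ℝ):ℂ) * I)) = w c := by norm_num
    rw [h0c] at hzero
    simp only [Complex.mul_re, Complex.mul_im, Complex.conj_re, Complex.conj_im,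
      Complex.I_re, Complex.I_im] at hzero ⊢
    nlinarith [hzero]
  -- contradiction with hcond at c
  have hcnd := hcond c hcball hc0
  have hu : 1 + w c ≠ 0 := hne c hcball
  have hbk : c * deriv w c = ((starRingEnd ℂ (w c)) * (c * deriv w c)) * w c := by
    have h1 : ((starRingEnd ℂ (w c)) * (c * deriv w c)) * w c
        = (c * deriv w c) * (w c * (starRingEnd ℂ (w c))) := by ring
    rw [h1, Complex.mul_conj, hns1]
    simp
  have hv : (w c / (1 + w c)).re = 1/2 := by
    have hnsu : 0 < Complex.normSq (1 + w c) := Complex.normSq_pos.mpr hu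
    have hh := hns1
    simp only [Complex.normSq_apply] at hh
    have hnsu2 : Complex.normSq (1 + w c) = 2 * (1 + (w c).re) := by
      simp only [Complex.normSq_apply, Complex.add_re, Complex.add_im, Complex.one_re,
        Complex.one_im]
      nlinarith [hh]
    have hpos : 0 < 1 + (w c).re := by nlinarith
    rw [Complex.div_re, hnsu2]
    simp only [Complex.add_re, Complex.add_im, Complex.one_re, Complex.one_im]
    field_simp
    nlinarith [hh]
  have hfinal : (c * deriv w c / (1 + w c)).re
      = ((starRingEnd ℂ (w c)) * (c * deriv w c)).re * (1/2) := by
    conv_lhs => rw [hbk]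
    rw [mul_div_assoc, Complex.mul_re, hkim, hv]
    ring
  rw [hfinal] at hcnd
  linarith

set_option maxHeartbeats 1000000 in
theorem re_z_div_f_gt_half_of_M32 (f : ℂ → ℂ)
    (hf : DifferentiableOn ℂ f (ball (0:ℂ) 1))
    (hf0 : f 0 = 0) (hf'0 : deriv f 0 = 1)
    (hfne : ∀ z ∈ ball (0:ℂ) 1, z ≠ 0 → f z ≠ 0)
    (hre : ∀ z ∈ ball (0:ℂ) 1, z ≠ 0 → (z * deriv f z / f z).re < 3 / 2) :
    ∀ z ∈ ball (0:ℂ) 1, z ≠ 0 → 1 / 2 < (z / f z).re := by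
  set g : ℂ → ℂ := dslope f 0 with hg
  have hgd : DifferentiableOn ℂ g (ball (0:ℂ) 1) :=
    (differentiableOn_dslope (ball_mem_nhds 0 one_pos)).mpr hf
  have hg0 : g 0 = 1 := by rw [hg, dslope_same, hf'0]
  have hfeq : ∀ z : ℂ, f z = z * g z := by
    intro z
    rcases eq_or_ne z 0 with rfl | hz
    · simp [hf0]
    · rw [hg, dslope_of_ne f hz, slope_def_field, hf0, sub_zero, sub_zero, mul_comm,
        div_mul_cancel₀ _ hz]
  have hgne : ∀ z ∈ ball (0:ℂ) 1, g z ≠ 0 := by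
    intro z hz
    rcases eq_or_ne z 0 with rfl | hz0
    · rw [hg0]; exact one_ne_zero
    · intro h
      apply hfne z hz hz0
      rw [hfeq z, h, mul_zero]
  -- derivative identity
  have hderiv : ∀ z ∈ ball (0:ℂ) 1, deriv f z = g z + z * deriv g z := by
    intro z hz
    have hgz : HasDerivAt g (deriv g z) z :=
      (hgd.differentiableAt (isOpen_ball.mem_nhds hz)).hasDerivAt
    have : HasDerivAt f (1 * g z + z * deriv g z) z := by
      have h1 := (hasDerivAt_id z).mul hgz
      have h2 : f = fun z => z * g z := funext hfeq
      rw [h2]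
      simpa [Pi.mul_def] using h1
    rw [this.deriv]; ring
  -- w = g - 1 satisfies the jack_bound hypotheses
  set w : ℂ → ℂ := fun z => g z - 1 with hwdef
  have hw : DifferentiableOn ℂ w (ball (0:ℂ) 1) := hgd.sub_const 1
  have hw0 : w 0 = 0 := by simp [hwdef, hg0]
  have hwadd : ∀ z, 1 + w z = g z := by intro z; simp [hwdef]
  have hwderiv : ∀ z ∈ ball (0:ℂ) 1, deriv w z = deriv g z := by
    intro z hz
    have hgz : HasDerivAt g (deriv g z) z :=
      (hgd.differentiableAt (isOpen_ball.mem_nhds hz)).hasDerivAt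
    exact (hgz.sub_const 1).deriv
  have hne : ∀ z ∈ ball (0:ℂ) 1, 1 + w z ≠ 0 := by
    intro z hz; rw [hwadd]; exact hgne z hz
  have hcond : ∀ z ∈ ball (0:ℂ) 1, z ≠ 0 → (z * deriv w z / (1 + w z)).re < 1/2 := by
    intro z hz hz0
    have h1 := hre z hz hz0
    have h2 : z * deriv f z / f z = 1 + z * deriv g z / g z := by
      rw [hderiv z hz, hfeq z]
      field_simp [hgne z hz, hz0]
    rw [h2] at h1
    rw [hwderiv z hz, hwadd]
    have : (1 + z * deriv g z / g z).re = 1 + (z * deriv g z / g z).re := by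
      simp [Complex.add_re]
    rw [this] at h1
    linarith
  have hjack := jack_bound hw hw0 hne hcond
  -- conclusion
  intro z hz hz0
  have hb := hjack z hz
  have hgz := hgne z hz
  have hzf : z / f z = 1 / g z := by
    rw [hfeq z]
    rw [div_eq_div_iff (by exact mul_ne_zero hz0 hgz) hgz]
    ring
  rw [hzf]
  have hns : Complex.normSq (g z - 1) < 1 := by
    rw [Complex.normSq_eq_norm_sq]
    nlinarith [norm_nonneg (w z), hb]
  have hkey : Complex.normSq (g z) < 2 * (g z).re := by
    simp only [Complex.normSq_apply, Complex.sub_re, Complex.sub_im, Complex.one_re,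
      Complex.one_im] at hns ⊢
    nlinarith [hns]
  have hnspos : 0 < Complex.normSq (g z) := Complex.normSq_pos.mpr hgz
  rw [Complex.div_re]
  simp only [Complex.one_re, Complex.one_im, one_mul, zero_mul, zero_div, add_zero]
  rw [lt_div_iff₀ hnspos]
  nlinarith [hkey]
end

section
/- Let f be analytic in the open unit disc Δ = {z ∈ ℂ : |z| < 1} with f(0) = 0 and f′(0) = 1, and suppose f(z) ≠ 0 for all z ∈ Δ with z ≠ 0. If Re(z·f′(z)/f(z)) < 3/2 for all z ∈ Δ with z ≠ 0, then |f(z)/z − 1| < 1 for all z ∈ Δ with z ≠ 0. -/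
open Complex Metric
open Set Filter Topology

lemma comp_real' {w : ℂ → ℂ} {p' : ℂ} {γ : ℝ → ℂ} {γ' : ℂ} {t : ℝ}
    (hw : HasDerivAt w p' (γ t)) (hγ : HasDerivAt γ γ' t) :
    HasDerivAt (fun s => w (γ s)) (p' * γ') t := by
  have := (hw.hasFDerivAt.restrictScalars ℝ).comp_hasDerivAt t hγ
  simpa [mul_comm, Function.comp_def] using this

lemma normSq_comp_deriv {h : ℝ → ℂ} {h' : ℂ} {t : ℝ} (H : HasDerivAt h h' t) :
    HasDerivAt (fun s => Complex.normSq (h s)) (2 * ((starRingEnd ℂ) (h t) * h').re) t := by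
  have hre : HasDerivAt (fun s => (h s).re) h'.re t :=
    (Complex.reCLM.hasFDerivAt.comp_hasDerivAt t H)
  have him : HasDerivAt (fun s => (h s).im) h'.im t :=
    (Complex.imCLM.hasFDerivAt.comp_hasDerivAt t H)
  have h2 := (hre.mul hre).add (him.mul him)
  simp only [Complex.normSq_apply]
  refine h2.congr_deriv ?_
  simp only [Complex.mul_re, Complex.conj_re, Complex.conj_im]; ring

lemma re_div_half {u : ℂ} (h1 : Complex.normSq u = 1) (h2 : (1:ℂ) + u ≠ 0) :
    (u / (1 + u)).re = 1/2 := by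
  have hab : u.re * u.re + u.im * u.im = 1 := by simpa [Complex.normSq_apply] using h1
  have hn : Complex.normSq (1 + u) = 2 * (1 + u.re) := by
    simp [Complex.normSq_apply]
    nlinarith
  have hnz : Complex.normSq (1 + u) ≠ 0 := (Complex.normSq_pos.mpr h2).ne'
  have hnne : (1:ℝ) + u.re ≠ 0 := by
    intro h; apply hnz; rw [hn, h]; ring
  rw [Complex.div_re, hn]
  simp only [Complex.add_re, Complex.add_im, Complex.one_re, Complex.one_im, zero_add]
  field_simp
  nlinarith

theorem f_div_z_near_one_of_M32 (f : ℂ → ℂ)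
    (hf : DifferentiableOn ℂ f (ball (0:ℂ) 1))
    (hf0 : f 0 = 0) (hf'0 : deriv f 0 = 1)
    (hfne : ∀ z ∈ ball (0:ℂ) 1, z ≠ 0 → f z ≠ 0)
    (hre : ∀ z ∈ ball (0:ℂ) 1, z ≠ 0 → (z * deriv f z / f z).re < 3 / 2) :
    ∀ z ∈ ball (0:ℂ) 1, z ≠ 0 → ‖f z / z - 1‖ < 1 := by
  by_contra hcon
  push_neg at hcon
  obtain ⟨z₁, hz₁b, hz₁0, hz₁⟩ := hcon
  have h01 : (0:ℂ) ∈ ball (0:ℂ) 1 := by simp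
  have hmem : ball (0:ℂ) 1 ∈ 𝓝 (0:ℂ) := isOpen_ball.mem_nhds h01
  set g := dslope f 0 with hg_def
  have hg : DifferentiableOn ℂ g (ball 0 1) := (Complex.differentiableOn_dslope hmem).mpr hf
  have hg0 : g 0 = 1 := by rw [hg_def, dslope_same, hf'0]
  have hgz : ∀ z : ℂ, z ≠ 0 → g z = f z / z := by
    intro z hz
    rw [hg_def, dslope_of_ne _ hz, slope_def_field, hf0]
    simp
  set w : ℂ → ℂ := fun z => g z - 1 with hw_def
  have hw : DifferentiableOn ℂ w (ball 0 1) := hg.sub_const 1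
  have hw0 : w 0 = 0 := by simp [hw_def, hg0]
  have hz₁w : 1 ≤ ‖w z₁‖ := by
    simpa [hw_def, hgz z₁ hz₁0] using hz₁
  -- compact set and minimizer
  set K := closedBall (0:ℂ) (‖z₁‖) with hK_def
  have hKsub : K ⊆ ball (0:ℂ) 1 := by
    intro z hz
    rw [mem_closedBall, dist_zero_right] at hz
    rw [mem_ball, dist_zero_right]
    exact lt_of_le_of_lt hz (by simpa [mem_ball, dist_zero_right] using hz₁b)
  set S := K ∩ (fun z => ‖w z‖) ⁻¹' (Ici 1) with hS_def
  have hz₁S : z₁ ∈ S := by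
    constructor
    · simp [hK_def, mem_closedBall, dist_zero_right]
    · exact hz₁w
  have hwK : ContinuousOn (fun z => ‖w z‖) K :=
    (continuous_norm.comp_continuousOn (hw.continuousOn.mono hKsub))
  have hScl : IsClosed S :=
    hwK.preimage_isClosed_of_isClosed Metric.isClosed_closedBall isClosed_Ici
  have hScompact : IsCompact S :=
    (isCompact_closedBall _ _).of_isClosed_subset hScl inter_subset_left
  obtain ⟨z₀, hz₀S, hz₀min⟩ :=
    hScompact.exists_isMinOn ⟨z₁, hz₁S⟩ continuous_norm.continuousOn
  have hz₀w : 1 ≤ ‖w z₀‖ := hz₀S.2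
  have hz₀ne : z₀ ≠ 0 := by
    rintro rfl
    rw [hw0] at hz₀w; norm_num at hz₀w
  set R := ‖z₀‖ with hR_def
  have hR0 : 0 < R := by simpa [hR_def] using (norm_pos_iff.mpr hz₀ne)
  have hz₀b : z₀ ∈ ball (0:ℂ) 1 := hKsub hz₀S.1
  have hR1 : R < 1 := by simpa [mem_ball, dist_zero_right] using hz₀b
  -- Claim A
  have hA : ∀ z : ℂ, ‖z‖ < R → ‖w z‖ < 1 := by
    intro z hz
    by_contra h
    push_neg at h
    have hzS : z ∈ S := by
      refine ⟨?_, h⟩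
      rw [hK_def, mem_closedBall, dist_zero_right]
      calc ‖z‖ ≤ R := hz.le
        _ ≤ ‖z₁‖ := by
          have h := hz₀S.1
          rw [hK_def, mem_closedBall, dist_zero_right] at h
          simpa [hR_def] using h
    exact absurd (hz₀min hzS) (by simpa using not_le.mpr hz)
  -- Claim B
  have hB : ∀ z : ℂ, ‖z‖ ≤ R → ‖w z‖ ≤ 1 := by
    intro z hz
    have hzb : z ∈ ball (0:ℂ) 1 := by
      rw [mem_ball, dist_zero_right]; exact lt_of_le_of_lt hz hR1
    have hcw : ContinuousAt w z :=
      (hw.differentiableAt (isOpen_ball.mem_nhds hzb)).continuousAt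
    have htend : Tendsto (fun t : ℝ => ‖w ((t:ℂ) * z)‖) (𝓝[<] (1:ℝ))
        (𝓝 (‖w z‖)) := by
      have h1 : Tendsto (fun t : ℝ => (t:ℂ) * z) (𝓝 (1:ℝ)) (𝓝 z) := by
        have h2 : Continuous (fun t : ℝ => (t:ℂ) * z) :=
          Complex.continuous_ofReal.mul continuous_const
        simpa using h2.tendsto (1:ℝ)
      exact ((continuous_norm.tendsto _).comp (hcw.tendsto.comp h1)).mono_left
        nhdsWithin_le_nhds
    refine le_of_tendsto htend ?_
    filter_upwards [Ioo_mem_nhdsLT_of_mem (Set.right_mem_Ioc.mpr (by norm_num : (0:ℝ) < 1))]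
      with t ht
    refine (hA _ ?_).le
    rw [norm_mul]
    calc ‖(t:ℂ)‖ * ‖z‖ ≤ ‖(t:ℂ)‖ * R := by
          exact mul_le_mul_of_nonneg_left hz (by positivity)
      _ < 1 * R := by
          apply mul_lt_mul_of_pos_right _ hR0
          rw [Complex.norm_real, Real.norm_eq_abs, abs_lt]
          constructor <;> [linarith [ht.1]; exact ht.2]
      _ = R := one_mul R
  have hwz₀1 : ‖w z₀‖ = 1 := le_antisymm (hB z₀ le_rfl) hz₀w
  -- Schwarz lemma setup
  have hRne : ((R:ℝ) : ℂ) ≠ 0 := by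
    exact_mod_cast hR0.ne'
  have hψmaps : MapsTo (fun z => w ((R:ℂ) * z)) (ball (0:ℂ) 1) (ball (0:ℂ) 1) := by
    intro z hz
    rw [mem_ball_zero_iff] at hz ⊢
    refine hA _ ?_
    rw [norm_mul, Complex.norm_real, Real.norm_eq_abs, _root_.abs_of_pos hR0]
    calc R * ‖z‖ < R * 1 :=
          mul_lt_mul_of_pos_left (by simpa using hz) hR0
      _ = R := mul_one R
  have hψd : DifferentiableOn ℂ (fun z => w ((R:ℂ) * z)) (ball (0:ℂ) 1) := by
    refine hw.comp ((differentiable_id.const_mul ((R:ℂ))).differentiableOn) ?_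
    intro z hz
    rw [mem_ball_zero_iff] at hz ⊢
    calc ‖(R:ℂ) * z‖ = R * ‖z‖ := by
          rw [norm_mul, Complex.norm_real, Real.norm_of_nonneg hR0.le]
      _ < R * 1 := mul_lt_mul_of_pos_left hz hR0
      _ ≤ 1 := by nlinarith
  have hC : ∀ t : ℝ, 0 ≤ t → t < 1 → ‖w ((t:ℂ) * z₀)‖ ≤ t := by
    intro t ht0 ht1
    have habs : ‖(t:ℂ) * z₀ / (R:ℂ)‖ < 1 := by
      rw [norm_div, norm_mul, Complex.norm_real, Complex.norm_real, Real.norm_eq_abs, Real.norm_eq_abs,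
        _root_.abs_of_nonneg ht0, _root_.abs_of_pos hR0, ← hR_def, mul_div_assoc,
        div_self hR0.ne', mul_one]
      exact ht1
    have hS := Complex.norm_le_norm_of_mapsTo_ball hψd (hψmaps.mono_right ball_subset_closedBall) (by simp [hw0]) habs
    rw [mul_div_cancel₀ _ hRne] at hS
    calc ‖w ((t:ℂ) * z₀)‖ ≤ ‖(t:ℂ) * z₀ / (R:ℂ)‖ := hS
      _ = t := by
        rw [norm_div, norm_mul, Complex.norm_real, Complex.norm_real, Real.norm_eq_abs, Real.norm_eq_abs,
          _root_.abs_of_nonneg ht0, _root_.abs_of_pos hR0, ← hR_def, mul_div_assoc,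
          div_self hR0.ne', mul_one]
  -- derivative data
  have hwz₀d : DifferentiableAt ℂ w z₀ := hw.differentiableAt (isOpen_ball.mem_nhds hz₀b)
  set c := deriv w z₀ * z₀ with hc_def
  set ζ := (starRingEnd ℂ) (w z₀) * c with hζ_def
  -- radial derivative: 1 ≤ ζ.re
  have hγr : HasDerivAt (fun t : ℝ => (t:ℂ) * z₀) z₀ 1 := by
    simpa using (Complex.ofRealCLM.hasDerivAt (x := (1:ℝ))).mul_const z₀
  have hhr : HasDerivAt (fun t : ℝ => w ((t:ℂ) * z₀)) (deriv w z₀ * z₀) 1 := by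
    have h1 : HasDerivAt w (deriv w z₀) ((fun t : ℝ => (t:ℂ) * z₀) 1) := by
      simpa using hwz₀d.hasDerivAt
    exact comp_real' h1 hγr
  have hNr : HasDerivAt (fun t : ℝ => Complex.normSq (w ((t:ℂ) * z₀))) (2 * ζ.re) 1 := by
    have h3 := normSq_comp_deriv hhr
    rw [hζ_def, hc_def]
    simpa using h3
  have hq : HasDerivAt (fun t : ℝ => Complex.normSq (w ((t:ℂ) * z₀)) - t^2)
      (2 * ζ.re - 2) 1 := by
    have hp : HasDerivAt (fun t : ℝ => t^2) 2 1 := by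
      simpa using hasDerivAt_pow 2 (1:ℝ)
    simpa using hNr.fun_sub hp
  have hq1 : Complex.normSq (w (((1:ℝ):ℂ) * z₀)) - (1:ℝ)^2 = 0 := by
    rw [Complex.ofReal_one, one_mul, Complex.normSq_eq_norm_sq, hwz₀1]
    norm_num
  have hζre : 1 ≤ ζ.re := by
    have hsub : HasDerivWithinAt (fun t : ℝ => Complex.normSq (w ((t:ℂ) * z₀)) - t^2)
        (2 * ζ.re - 2) (Ioo (0:ℝ) 1) 1 := hq.hasDerivWithinAt
    rw [hasDerivWithinAt_iff_tendsto_slope] at hsub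
    have hIoo : Ioo (0:ℝ) 1 \ {1} = Ioo (0:ℝ) 1 := diff_singleton_eq_self (by simp)
    rw [hIoo] at hsub
    haveI := right_nhdsWithin_Ioo_neBot (show (0:ℝ) < 1 by norm_num)
    have hge : (0:ℝ) ≤ 2 * ζ.re - 2 := by
      refine ge_of_tendsto hsub ?_
      filter_upwards [self_mem_nhdsWithin] with t ht
      rw [slope_def_field, hq1, sub_zero]
      apply div_nonneg_of_nonpos
      · have habs := hC t ht.1.le ht.2
        have h4 : Complex.normSq (w ((t:ℂ) * z₀)) ≤ t^2 := by
          rw [Complex.normSq_eq_norm_sq]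
          have h0 : (0:ℝ) ≤ t := ht.1.le
          nlinarith [norm_nonneg (w ((t:ℂ) * z₀))]
        linarith
      · linarith [ht.2]
    linarith
  -- tangential derivative : ζ.im = 0
  have hγθ : HasDerivAt (fun θ : ℝ => Complex.exp ((θ:ℂ) * Complex.I) * z₀)
      (Complex.I * z₀) 0 := by
    have h1 : HasDerivAt (fun θ : ℝ => ((θ:ℂ) * Complex.I)) Complex.I 0 := by
      simpa using (Complex.ofRealCLM.hasDerivAt (x := (0:ℝ))).mul_const Complex.I
    have h2 : HasDerivAt Complex.exp (Complex.exp (((0:ℝ):ℂ) * Complex.I))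
        (((0:ℝ):ℂ) * Complex.I) := Complex.hasDerivAt_exp _
    have h3 := comp_real' (γ := fun θ : ℝ => (θ:ℂ) * Complex.I) (t := 0) h2 h1
    have h4 := h3.mul_const z₀
    simpa using h4
  have hhθ : HasDerivAt (fun θ : ℝ => w (Complex.exp ((θ:ℂ) * Complex.I) * z₀))
      (deriv w z₀ * (Complex.I * z₀)) 0 := by
    have h1 : HasDerivAt w (deriv w z₀)
        ((fun θ : ℝ => Complex.exp ((θ:ℂ) * Complex.I) * z₀) 0) := by
      simpa using hwz₀d.hasDerivAt
    exact comp_real' h1 hγθ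
  have hNθ := normSq_comp_deriv hhθ
  have hmax : IsLocalMax (fun θ : ℝ => Complex.normSq (w (Complex.exp ((θ:ℂ) * Complex.I) * z₀))) 0 := by
    apply Filter.Eventually.of_forall
    intro θ
    have h5 : ‖w (Complex.exp ((θ:ℂ) * Complex.I) * z₀)‖ ≤ 1 := by
      apply hB
      rw [norm_mul, Complex.norm_exp_ofReal_mul_I, one_mul]
    have h6 : Complex.normSq (w (Complex.exp (((0:ℝ):ℂ) * Complex.I) * z₀)) = 1 := by
      rw [Complex.ofReal_zero, zero_mul, Complex.exp_zero, one_mul,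
        Complex.normSq_eq_norm_sq, hwz₀1]; norm_num
    simp only [h6]
    rw [Complex.normSq_eq_norm_sq]
    nlinarith [norm_nonneg (w (Complex.exp ((θ:ℂ) * Complex.I) * z₀))]
  have hθ0 : 2 * ((starRingEnd ℂ) (w z₀) * (deriv w z₀ * (Complex.I * z₀))).re = 0 := by
    apply hmax.hasDerivAt_eq_zero
    have := hNθ
    simpa using this
  have hζim : ζ.im = 0 := by
    have h7 : ((starRingEnd ℂ) (w z₀) * (deriv w z₀ * (Complex.I * z₀))) = Complex.I * ζ := by
      rw [hζ_def, hc_def]; ring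
    rw [h7] at hθ0
    simp [Complex.mul_re, Complex.I_re, Complex.I_im] at hθ0
    linarith [hθ0]
  -- express ζ as a real number
  obtain ⟨k, hk⟩ : ∃ k : ℝ, ζ = (k:ℂ) := ⟨ζ.re, by apply Complex.ext <;> simp [hζim]⟩
  have hk1 : 1 ≤ k := by
    rw [hk] at hζre; simpa using hζre
  -- final computation
  have hfz₀ : f z₀ ≠ 0 := hfne z₀ hz₀b hz₀ne
  have hgz₀ : g z₀ = f z₀ / z₀ := hgz z₀ hz₀ne
  have hgz₀ne : g z₀ ≠ 0 := by rw [hgz₀]; exact div_ne_zero hfz₀ hz₀ne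
  have heq : f =ᶠ[𝓝 z₀] fun z => z * g z := by
    filter_upwards [isOpen_ball.mem_nhds hz₀b] with z hz
    rcases eq_or_ne z 0 with rfl | h
    · simp [hf0]
    · rw [hgz z h]; field_simp
  have hgd : DifferentiableAt ℂ g z₀ := hg.differentiableAt (isOpen_ball.mem_nhds hz₀b)
  have hdf : deriv f z₀ = g z₀ + z₀ * deriv g z₀ := by
    rw [Filter.EventuallyEq.deriv_eq heq, deriv_fun_mul differentiableAt_fun_id hgd]
    simp
  have hdg : deriv w z₀ = deriv g z₀ := by
    rw [hw_def]
    exact deriv_sub_const _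
  have hfzeq : f z₀ = z₀ * g z₀ := by
    rw [hgz₀]; field_simp
  have hkey : z₀ * deriv f z₀ / f z₀ = 1 + c / g z₀ := by
    rw [hdf, hfzeq, hc_def, hdg]
    field_simp
  -- c = ζ * w z₀
  have hw₀n : Complex.normSq (w z₀) = 1 := by
    rw [Complex.normSq_eq_norm_sq, hwz₀1]; norm_num
  have hgw : g z₀ = 1 + w z₀ := by rw [hw_def]; ring
  have hcw : (starRingEnd ℂ) (w z₀) * w z₀ = 1 := by
    rw [mul_comm, Complex.mul_conj, hw₀n]; norm_num
  have hcgw : c = ζ * w z₀ := by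
    rw [hζ_def]
    calc c = c * ((starRingEnd ℂ) (w z₀) * w z₀) := by rw [hcw, mul_one]
      _ = (starRingEnd ℂ) (w z₀) * c * w z₀ := by ring
  -- Re (w₀ / (1 + w₀)) = 1/2
  have hre2 : ((w z₀) / (1 + w z₀)).re = 1/2 :=
    re_div_half hw₀n (hgw ▸ hgz₀ne)
  have hfinal : (z₀ * deriv f z₀ / f z₀).re = 1 + k * (1/2) := by
    rw [hkey, Complex.add_re, Complex.one_re, hcgw, hgw, hk, mul_div_assoc,
      Complex.re_ofReal_mul, hre2]
  have hlt := hre z₀ hz₀b hz₀ne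
  rw [hfinal] at hlt
  linarith
end

section
/- Let f be analytic in the open unit disc Δ = {z ∈ ℂ : |z| < 1} with f(0) = 0 and f′(0) = 1, and suppose f′(z) ≠ 0 for all z ∈ Δ. If Re(1 + z·f″(z)/f′(z)) < 3/2 for all z ∈ Δ, then Re(1/f′(z)) > 1/2 for all z ∈ Δ. -/
open Complex Metric ComplexConjugate Set Filter Topology


-- Aux 1: Re(1/g) ≤ 1/2 and g ≠ 0 implies ‖g-1‖ ≥ 1
lemma aux_norm_ge (g : ℂ) (hg : g ≠ 0) (h : (1 / g).re ≤ 1 / 2) : 1 ≤ ‖g - 1‖ := by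
  have hns : 0 < normSq g := normSq_pos.2 hg
  rw [one_div, inv_re] at h
  have h2 : 2 * g.re ≤ normSq g := by
    rw [div_le_iff₀ hns] at h; nlinarith
  have hsq : 1 ≤ ‖g - 1‖ ^ 2 := by
    have : ‖g - 1‖ ^ 2 = normSq (g - 1) := by rw [Complex.sq_norm]
    rw [this, normSq_sub]
    simp only [normSq_one, mul_one]
    have : (g * conj 1).re = g.re := by simp
    rw [this]; linarith
  nlinarith [norm_nonneg (g - 1)]

-- Aux 3: ‖s‖ = 1, 1+s ≠ 0 → Re(s/(1+s)) = 1/2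
lemma aux_re_half (s : ℂ) (hs : ‖s‖ = 1) (h1 : (1:ℂ) + s ≠ 0) : (s / (1 + s)).re = 1 / 2 := by
  have hs0 : s ≠ 0 := by intro h; rw [h] at hs; simp at hs
  have hconj : conj s = s⁻¹ := by
    have : s * conj s = 1 := by
      rw [Complex.mul_conj]
      norm_cast
      rw [Complex.normSq_eq_norm_sq]
      simp [hs]
    field_simp at this ⊢
    linear_combination this
  have key : s / (1 + s) + conj (s / (1 + s)) = 1 := by
    rw [map_div₀, map_add, map_one, hconj]
    have h2 : (1:ℂ) + s⁻¹ ≠ 0 := by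
      intro h
      have : s * (1 + s⁻¹) = 0 := by rw [h, mul_zero]
      rw [mul_add, mul_inv_cancel₀ hs0, mul_one] at this
      exact h1 (by linear_combination this)
    have h3 : s⁻¹ / (1 + s⁻¹) = 1 / (1 + s) := by
      rw [div_eq_div_iff h2 h1]
      field_simp; ring
    rw [h3, ← add_div, add_comm s 1, div_self h1]
  have := congrArg Complex.re key
  rw [Complex.add_re, Complex.conj_re, Complex.one_re] at this
  linarith


-- IVT lemma
lemma aux_ivt (w : ℂ → ℂ) (hw : ContinuousOn w (ball (0:ℂ) 1)) (hw0 : w 0 = 0)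
    (ζ : ℂ) (hζ : ‖ζ‖ < 1) (h1 : 1 ≤ ‖w ζ‖) :
    ∃ t ∈ Set.Icc (0:ℝ) 1, ‖w ((t:ℂ) * ζ)‖ = 1 := by
  have hmem : ∀ t ∈ Set.Icc (0:ℝ) 1, ((t:ℂ) * ζ) ∈ ball (0:ℂ) 1 := by
    intro t ht
    rw [mem_ball_zero_iff, norm_mul, Complex.norm_real]
    rcases eq_or_lt_of_le (norm_nonneg ζ) with h | h
    · rw [← h]; simpa using hζ
    · calc ‖t‖ * ‖ζ‖ ≤ 1 * ‖ζ‖ := by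
            apply mul_le_mul_of_nonneg_right _ (norm_nonneg ζ)
            rw [Real.norm_eq_abs, abs_le]; exact ⟨by linarith [ht.1], ht.2⟩
        _ < 1 := by simpa using hζ
  have hcont : ContinuousOn (fun t : ℝ => ‖w ((t:ℂ) * ζ)‖) (Set.Icc 0 1) := by
    apply continuous_norm.comp_continuousOn
    exact hw.comp ((Complex.continuous_ofReal.mul continuous_const).continuousOn) hmem
  have h01 : (1:ℝ) ∈ Set.Icc (‖w (((0:ℝ):ℂ) * ζ)‖) (‖w (((1:ℝ):ℂ) * ζ)‖) := by
    constructor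
    · simp [hw0]
    · simpa using h1
  obtain ⟨t, ht, hut⟩ := intermediate_value_Icc (by norm_num : (0:ℝ) ≤ 1) hcont h01
  exact ⟨t, ht, hut⟩

-- Schwarz lemma variant
lemma aux_schwarz (w : ℂ → ℂ) (r : ℝ) (hr : 0 < r)
    (hw : DifferentiableOn ℂ w (ball (0:ℂ) r)) (hw0 : w 0 = 0)
    (hb : ∀ z ∈ ball (0:ℂ) r, ‖w z‖ ≤ 1) (z : ℂ) (hz : z ∈ ball (0:ℂ) r) :
    ‖w z‖ ≤ ‖z‖ / r := by
  refine le_of_forall_pos_le_add ?_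
  intro ε hε
  set R : ℝ := 1 + ε * r / (‖z‖ + 1) with hR
  have hz1 : (0:ℝ) < ‖z‖ + 1 := by positivity
  have hR1 : 1 < R := by
    have : 0 < ε * r / (‖z‖ + 1) := by positivity
    rw [hR]; linarith
  have hmaps : Set.MapsTo w (ball (0:ℂ) r) (closedBall (w 0) R) := by
    intro x hx
    rw [hw0, mem_closedBall_zero_iff]
    exact (lt_of_le_of_lt (hb x hx) hR1).le
  have key := Complex.dist_le_div_mul_dist_of_mapsTo_ball hw hmaps hz
  rw [hw0, dist_zero_right, dist_zero_right] at key
  calc ‖w z‖ ≤ R / r * ‖z‖ := key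
    _ = ‖z‖ / r + ε * (‖z‖ / (‖z‖ + 1)) := by
        rw [hR]; field_simp
    _ ≤ ‖z‖ / r + ε := by
        have h2 : ‖z‖ / (‖z‖ + 1) ≤ 1 := by
          rw [div_le_one hz1]; linarith
        nlinarith


theorem re_inv_deriv_gt_half_of_N32 (f : ℂ → ℂ)
    (hf : DifferentiableOn ℂ f (ball (0:ℂ) 1))
    (hf0 : f 0 = 0) (hf'0 : deriv f 0 = 1)
    (hne : ∀ z ∈ ball (0:ℂ) 1, deriv f z ≠ 0)
    (hre : ∀ z ∈ ball (0:ℂ) 1, (1 + z * deriv (deriv f) z / deriv f z).re < 3 / 2) :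
    ∀ z ∈ ball (0:ℂ) 1, 1 / 2 < (1 / deriv f z).re := by
  intro z₁ hz₁mem
  by_contra hcon
  push_neg at hcon
  have hz₁ : ‖z₁‖ < 1 := mem_ball_zero_iff.mp hz₁mem
  -- the function w = f' - 1
  have hfa : AnalyticOnNhd ℂ f (ball 0 1) := hf.analyticOnNhd isOpen_ball
  have hf'a : AnalyticOnNhd ℂ (deriv f) (ball 0 1) := hfa.deriv
  set w : ℂ → ℂ := fun z => deriv f z - 1 with hwdef
  have hwd : DifferentiableOn ℂ w (ball (0:ℂ) 1) :=
    (hf'a.differentiableOn).sub (differentiableOn_const 1)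
  have hwc : ContinuousOn w (ball (0:ℂ) 1) := hwd.continuousOn
  have hw0 : w 0 = 0 := by simp only [hwdef, hf'0, sub_self]
  have hwz₁ : 1 ≤ ‖w z₁‖ := aux_norm_ge _ (hne z₁ hz₁mem) hcon
  -- existence of a point with ‖w‖ = 1
  obtain ⟨t₁, ht₁, hwt₁⟩ := aux_ivt w hwc hw0 z₁ hz₁ hwz₁
  -- the set K
  set K : Set ℂ := {z | z ∈ closedBall (0:ℂ) ‖z₁‖ ∧ ‖w z‖ = 1} with hKdef
  have hcbsub : closedBall (0:ℂ) ‖z₁‖ ⊆ ball (0:ℂ) 1 := by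
    intro x hx
    rw [mem_closedBall_zero_iff] at hx
    rw [mem_ball_zero_iff]
    exact lt_of_le_of_lt hx hz₁
  have hKne : K.Nonempty := by
    refine ⟨(t₁:ℂ) * z₁, ?_, hwt₁⟩
    rw [mem_closedBall_zero_iff, norm_mul, Complex.norm_real, Real.norm_eq_abs,
      _root_.abs_of_nonneg ht₁.1]
    nlinarith [ht₁.2, norm_nonneg z₁]
  have hKcl : IsClosed K := by
    have h1 : ContinuousOn (fun z => ‖w z‖) (closedBall (0:ℂ) ‖z₁‖) :=
      (continuous_norm.comp_continuousOn (hwc.mono hcbsub))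
    have h2 := h1.preimage_isClosed_of_isClosed Metric.isClosed_closedBall
      (isClosed_singleton (x := (1:ℝ)))
    have heq : K = closedBall (0:ℂ) ‖z₁‖ ∩ (fun z => ‖w z‖) ⁻¹' {1} := by
      ext z; simp [hKdef]
    rw [heq]; exact h2
  have hKcp : IsCompact K :=
    (isCompact_closedBall (0:ℂ) ‖z₁‖).of_isClosed_subset hKcl (fun z hz => hz.1)
  obtain ⟨z₀, hz₀K, hz₀min⟩ := hKcp.exists_isMinOn hKne (continuous_norm.continuousOn)
  set r : ℝ := ‖z₀‖ with hrdef
  have hw₀n : ‖w z₀‖ = 1 := hz₀K.2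
  have hr1 : r < 1 := lt_of_le_of_lt (mem_closedBall_zero_iff.mp hz₀K.1) hz₁
  have hz₀mem : z₀ ∈ ball (0:ℂ) 1 := mem_ball_zero_iff.mpr hr1
  have hrpos : 0 < r := by
    rcases eq_or_lt_of_le (norm_nonneg z₀) with h | h
    · exfalso
      have : z₀ = 0 := by rwa [eq_comm, norm_eq_zero] at h
      rw [this, hw0] at hw₀n; simp at hw₀n
    · exact h
  -- maximum on the closed ball of radius r
  have hmax : ∀ ζ ∈ closedBall (0:ℂ) r, ‖w ζ‖ ≤ 1 := by
    intro ζ hζ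
    by_contra hgt
    push_neg at hgt
    rw [mem_closedBall_zero_iff] at hζ
    have hζ1 : ‖ζ‖ < 1 := lt_of_le_of_lt hζ hr1
    obtain ⟨t, ht, hwt⟩ := aux_ivt w hwc hw0 ζ hζ1 hgt.le
    have htζK : (t:ℂ) * ζ ∈ K := by
      refine ⟨?_, hwt⟩
      rw [mem_closedBall_zero_iff, norm_mul, Complex.norm_real, Real.norm_eq_abs,
        _root_.abs_of_nonneg ht.1]
      have h1 : t * ‖ζ‖ ≤ ‖ζ‖ := by nlinarith [ht.2, norm_nonneg ζ]
      have h2 : r ≤ ‖z₁‖ := mem_closedBall_zero_iff.mp hz₀K.1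
      nlinarith [ht.2, norm_nonneg ζ, ht.1]
    have hmin := hz₀min htζK
    simp only [IsMinOn] at hmin
    have hrle : r ≤ ‖(t:ℂ) * ζ‖ := hmin
    rw [norm_mul, Complex.norm_real, Real.norm_eq_abs, _root_.abs_of_nonneg ht.1] at hrle
    have hζ0 : ‖ζ‖ ≠ 0 := by
      intro h
      rw [norm_eq_zero] at h
      rw [h, hw0] at hgt
      rw [norm_zero] at hgt
      linarith
    have ht1 : t = 1 := by
      have h3 : t * ‖ζ‖ ≤ ‖ζ‖ := by nlinarith [ht.2, norm_nonneg ζ]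
      have h4 : ‖ζ‖ ≤ t * ‖ζ‖ := le_trans hζ hrle
      have h5 : t * ‖ζ‖ = 1 * ‖ζ‖ := by rw [one_mul]; exact le_antisymm h3 h4
      exact mul_right_cancel₀ hζ0 h5
    rw [ht1] at hwt
    simp only [Complex.ofReal_one, one_mul] at hwt
    rw [hwt] at hgt
    exact lt_irrefl 1 hgt
  -- Schwarz estimate
  have hballr : ball (0:ℂ) r ⊆ ball (0:ℂ) 1 := ball_subset_ball hr1.le
  have hS : ∀ z ∈ ball (0:ℂ) r, ‖w z‖ ≤ ‖z‖ / r :=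
    fun z hz => aux_schwarz w r hrpos (hwd.mono hballr) hw0
      (fun x hx => hmax x (ball_subset_closedBall hx)) z hz
  have hwA : DifferentiableAt ℂ w z₀ := hwd.differentiableAt (isOpen_ball.mem_nhds hz₀mem)
  have hwAd : HasDerivAt w (deriv w z₀) z₀ := hwA.hasDerivAt
  set d : ℂ := deriv w z₀ with hddef
  set w₀ : ℂ := w z₀ with hw₀def
  set A : ℂ := d * z₀ * conj w₀ with hAdef
  have hnsq : w₀ * conj w₀ = 1 := by
    rw [Complex.mul_conj]
    rw [Complex.normSq_eq_norm_sq, hw₀n]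
    norm_num
  -- radial direction : 1 ≤ A.re
  have hGin : HasDerivAt (fun t : ℝ => (t:ℂ) * z₀) z₀ 1 := by
    simpa using (((hasDerivAt_id (1:ℝ)).ofReal_comp).mul_const z₀)
  have hG : HasDerivAt (fun t : ℝ => w ((t:ℂ) * z₀)) (d * z₀) 1 := by
    have h0 := hwAd.comp_of_eq (1:ℝ) hGin (by simp)
    exact h0
  have hslopeG : Tendsto (slope (fun t : ℝ => w ((t:ℂ) * z₀)) 1) (𝓝[≠] (1:ℝ)) (𝓝 (d * z₀)) :=
    hasDerivAt_iff_tendsto_slope.mp hG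
  have hmono : 𝓝[<] (1:ℝ) ≤ 𝓝[≠] (1:ℝ) := nhdsWithin_mono 1 (fun x hx => ne_of_lt hx)
  have hcontm : Continuous (fun ζ : ℂ => (ζ * conj w₀).re) :=
    Complex.continuous_re.comp (continuous_id.mul continuous_const)
  have hreA : 1 ≤ A.re := by
    have htend : Tendsto (fun t : ℝ => ((slope (fun s : ℝ => w ((s:ℂ) * z₀)) 1 t) * conj w₀).re)
        (𝓝[<] (1:ℝ)) (𝓝 A.re) := by
      rw [hAdef]
      exact (hcontm.tendsto (d * z₀)).comp (hslopeG.mono_left hmono)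
    refine ge_of_tendsto htend ?_
    filter_upwards [Ioo_mem_nhdsLT_of_mem (⟨by norm_num, le_refl 1⟩ : (1:ℝ) ∈ Ioc 0 1)] with t ht
    have hG1 : w (((1:ℝ):ℂ) * z₀) = w₀ := by norm_num [hw₀def]
    rw [slope_def_module, hG1, smul_mul_assoc, Complex.real_smul, Complex.re_ofReal_mul]
    set u : ℂ := w ((t:ℂ) * z₀) with hudef
    have hnu : ‖u‖ ≤ t := by
      have hmem : (t:ℂ) * z₀ ∈ ball (0:ℂ) r := by
        rw [mem_ball_zero_iff, norm_mul, Complex.norm_real, Real.norm_eq_abs,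
          _root_.abs_of_nonneg ht.1.le]
        calc t * ‖z₀‖ < 1 * ‖z₀‖ := by
              exact mul_lt_mul_of_pos_right ht.2 hrpos
          _ = r := by rw [one_mul]
      have := hS _ hmem
      rw [norm_mul, Complex.norm_real, Real.norm_eq_abs, _root_.abs_of_nonneg ht.1.le] at this
      calc ‖u‖ ≤ t * ‖z₀‖ / r := this
        _ = t := by
              have hne0 : ‖z₀‖ ≠ 0 := ne_of_gt hrpos
              field_simp
              rw [hrdef]
    have hx : ((u - w₀) * conj w₀).re ≤ t - 1 := by
      have h1 : (u - w₀) * conj w₀ = u * conj w₀ - 1 := by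
        rw [sub_mul, hnsq]
      rw [h1, Complex.sub_re, Complex.one_re]
      have h2 : (u * conj w₀).re ≤ ‖u‖ := by
        calc (u * conj w₀).re ≤ ‖u * conj w₀‖ := Complex.re_le_norm _
          _ = ‖u‖ * ‖w₀‖ := by rw [norm_mul, Complex.norm_conj]
          _ = ‖u‖ := by rw [hw₀n, mul_one]
      linarith
    rw [inv_mul_eq_div]
    rw [le_div_iff_of_neg (by linarith [ht.2] : t - (1:ℝ) < 0)]
    linarith
  -- tangential direction : A.im = 0
  have hTin : HasDerivAt (fun θ : ℝ => z₀ * Complex.exp ((θ:ℂ) * I)) (z₀ * I) 0 := by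
    have h1 : HasDerivAt (fun θ : ℝ => (θ:ℂ) * I) I 0 := by
      simpa using (((hasDerivAt_id (0:ℝ)).ofReal_comp).mul_const I)
    have h2 := h1.cexp
    have h3 := h2.const_mul z₀
    norm_num at h3
    exact h3
  have hT : HasDerivAt (fun θ : ℝ => w (z₀ * Complex.exp ((θ:ℂ) * I))) (d * (z₀ * I)) 0 := by
    have h0 := hwAd.comp_of_eq (0:ℝ) hTin (by simp)
    exact h0
  have hslopeT : Tendsto (slope (fun θ : ℝ => w (z₀ * Complex.exp ((θ:ℂ) * I))) 0) (𝓝[≠] (0:ℝ))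
      (𝓝 (d * (z₀ * I))) := hasDerivAt_iff_tendsto_slope.mp hT
  have hT0 : w (z₀ * Complex.exp (((0:ℝ):ℂ) * I)) = w₀ := by norm_num [hw₀def]
  have hxT : ∀ θ : ℝ, ((w (z₀ * Complex.exp ((θ:ℂ) * I)) - w₀) * conj w₀).re ≤ 0 := by
    intro θ
    set u : ℂ := w (z₀ * Complex.exp ((θ:ℂ) * I)) with hudef
    have hnu : ‖u‖ ≤ 1 := by
      apply hmax
      rw [mem_closedBall_zero_iff, norm_mul]
      rw [Complex.norm_exp_ofReal_mul_I, mul_one]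
    have h1 : (u - w₀) * conj w₀ = u * conj w₀ - 1 := by rw [sub_mul, hnsq]
    rw [h1, Complex.sub_re, Complex.one_re]
    have h2 : (u * conj w₀).re ≤ ‖u‖ := by
      calc (u * conj w₀).re ≤ ‖u * conj w₀‖ := Complex.re_le_norm _
        _ = ‖u‖ * ‖w₀‖ := by rw [norm_mul, Complex.norm_conj]
        _ = ‖u‖ := by rw [hw₀n, mul_one]
    linarith
  have htendT : Tendsto (fun θ : ℝ => ((slope (fun θ : ℝ => w (z₀ * Complex.exp ((θ:ℂ) * I))) 0 θ)
      * conj w₀).re) (𝓝[≠] (0:ℝ)) (𝓝 ((d * (z₀ * I) * conj w₀).re)) :=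
    (hcontm.tendsto _).comp hslopeT
  have hAim : (d * (z₀ * I) * conj w₀).re = 0 := by
    have hle : (d * (z₀ * I) * conj w₀).re ≤ 0 := by
      have hmonoR : 𝓝[>] (0:ℝ) ≤ 𝓝[≠] (0:ℝ) := nhdsWithin_mono 0 (fun x hx => ne_of_gt hx)
      refine le_of_tendsto (htendT.mono_left hmonoR) ?_
      filter_upwards [self_mem_nhdsWithin] with θ hθ
      rw [slope_def_module, hT0, smul_mul_assoc, Complex.real_smul, Complex.re_ofReal_mul,
        sub_zero]
      have := hxT θ
      have hinv : 0 ≤ (θ:ℝ)⁻¹ := inv_nonneg.mpr (le_of_lt hθ)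
      exact mul_nonpos_iff.mpr (Or.inl ⟨hinv, this⟩)
    have hge : 0 ≤ (d * (z₀ * I) * conj w₀).re := by
      have hmonoL : 𝓝[<] (0:ℝ) ≤ 𝓝[≠] (0:ℝ) := nhdsWithin_mono 0 (fun x hx => ne_of_lt hx)
      refine ge_of_tendsto (htendT.mono_left hmonoL) ?_
      filter_upwards [self_mem_nhdsWithin] with θ hθ
      rw [slope_def_module, hT0, smul_mul_assoc, Complex.real_smul, Complex.re_ofReal_mul,
        sub_zero]
      have := hxT θ
      have hinv : (θ:ℝ)⁻¹ ≤ 0 := inv_nonpos.mpr (le_of_lt hθ)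
      exact mul_nonneg_iff.mpr (Or.inr ⟨hinv, this⟩)
    linarith
  have hAim' : A.im = 0 := by
    have h1 : d * (z₀ * I) * conj w₀ = I * A := by rw [hAdef]; ring
    rw [h1] at hAim
    have : (I * A).re = -A.im := by simp [Complex.mul_re]
    linarith [this ▸ hAim]
  -- final contradiction
  have hfz₀ : deriv f z₀ = 1 + w₀ := by
    rw [hw₀def, hwdef]; ring
  have h1w : (1:ℂ) + w₀ ≠ 0 := by rw [← hfz₀]; exact hne z₀ hz₀mem
  have hdd : deriv (deriv f) z₀ = d := by
    rw [hddef, hwdef]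
    exact (deriv_sub_const 1).symm
  have hzd : z₀ * d = A * w₀ := by
    have h1 : z₀ * d = z₀ * d * (w₀ * conj w₀) := by rw [hnsq, mul_one]
    rw [h1, hAdef]; ring
  have hkey := hre z₀ hz₀mem
  rw [hdd, hfz₀, hzd] at hkey
  have hexp : (1 + A * w₀ / (1 + w₀)).re = 1 + A.re * (1/2) := by
    rw [mul_div_assoc, Complex.add_re, Complex.one_re, Complex.mul_re, hAim',
      aux_re_half w₀ hw₀n h1w]
    ring
  rw [hexp] at hkey
  linarith
end

section
/- Let f be analytic in the open unit disc Δ = {z ∈ ℂ : |z| < 1} with f(0) = 0 and f′(0) = 1, and suppose f′(z) ≠ 0 for all z ∈ Δ. If Re(1 + z·f″(z)/f′(z)) < 3/2 for all z ∈ Δ, then |f′(z) − 1| < 1 for all z ∈ Δ. -/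
open Complex Metric Filter Set Topology

lemma aux_normSq_hasDerivAt {W : ℝ → ℂ} {W' : ℂ} {t : ℝ} (h : HasDerivAt W W' t) :
    HasDerivAt (fun s => Complex.normSq (W s))
      (2 * ((W t).re * W'.re + (W t).im * W'.im)) t := by
  have hre : HasDerivAt (fun s => (W s).re) W'.re t :=
    Complex.reCLM.hasFDerivAt.comp_hasDerivAt t h
  have him : HasDerivAt (fun s => (W s).im) W'.im t :=
    Complex.imCLM.hasFDerivAt.comp_hasDerivAt t h
  have h2 : HasDerivAt (fun x => (W x).re * (W x).re + (W x).im * (W x).im) _ t :=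
    (hre.mul hre).add (him.mul him)
  have he : (fun s => Complex.normSq (W s))
      = fun x => (W x).re * (W x).re + (W x).im * (W x).im := by
    funext s; exact Complex.normSq_apply _
  rw [he]
  convert h2 using 1
  ring

lemma aux_curve1 (z₀ : ℂ) (t : ℝ) : HasDerivAt (fun s : ℝ => (s : ℂ) * z₀) z₀ t := by
  simpa using (Complex.ofRealCLM.hasDerivAt (x := t)).mul_const z₀

lemma aux_curve2 (z₀ : ℂ) : HasDerivAt (fun θ : ℝ => z₀ * Complex.exp (θ * I)) (z₀ * I) 0 := by
  have h1 : HasDerivAt (fun θ : ℝ => (θ : ℂ) * I) I 0 := aux_curve1 I 0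
  have h3 := h1.cexp.const_mul z₀
  simpa using h3

lemma aux_final {x y u v : ℝ} (key1 : x * x + y * y ≤ x * u + y * v) (key2 : x * v = y * u)
    (hs1 : 1 ≤ x * x + y * y)
    (H2 : u * (x + 1) + v * y < 1 / 2 * ((x + 1) * (x + 1) + y * y)) : False := by
  have hxs : 0 ≤ x + (x * x + y * y) := by nlinarith [sq_nonneg (x + 1)]
  have hu : u * (x * x + y * y) = (x * u + y * v) * x := by linear_combination (-y) * key2
  have hv : v * (x * x + y * y) = (x * u + y * v) * y := by linear_combination x * key2
  have h5 : (x * x + y * y) * (2 * (u * (x + 1) + v * y))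
      < (x * x + y * y) * ((x + 1) * (x + 1) + y * y) :=
    mul_lt_mul_of_pos_left (by linarith) (by linarith)
  have e1 : (x * x + y * y) * (2 * (u * (x + 1) + v * y))
      = 2 * (x * u + y * v) * ((x * x + y * y) + x) := by
    linear_combination (2 * (x + 1)) * hu + (2 * y) * hv
  rw [e1] at h5
  nlinarith [mul_nonneg (sub_nonneg.mpr key1) hxs,
    mul_le_mul_of_nonneg_left hs1 (by linarith : (0:ℝ) ≤ x * x + y * y)]

theorem deriv_near_one_of_N32 (f : ℂ → ℂ)
    (hf : DifferentiableOn ℂ f (ball (0:ℂ) 1))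
    (hf0 : f 0 = 0) (hf'0 : deriv f 0 = 1)
    (hne : ∀ z ∈ ball (0:ℂ) 1, deriv f z ≠ 0)
    (hre : ∀ z ∈ ball (0:ℂ) 1, (1 + z * deriv (deriv f) z / deriv f z).re < 3 / 2) :
    ∀ z ∈ ball (0:ℂ) 1, ‖deriv f z - 1‖ < 1 := by
  intro z hz
  by_contra hcon
  push_neg at hcon
  -- analyticity facts
  have hfa : AnalyticOnNhd ℂ f (ball (0:ℂ) 1) := hf.analyticOnNhd isOpen_ball
  have hga : AnalyticOnNhd ℂ (deriv f) (ball (0:ℂ) 1) := hfa.deriv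
  have hgd : DifferentiableOn ℂ (deriv f) (ball (0:ℂ) 1) := hga.differentiableOn
  -- the radius r
  have hz0 : z ≠ 0 := by
    rintro rfl
    rw [hf'0] at hcon
    norm_num at hcon
  set r : ℝ := ‖z‖ with hrdef
  have hr1 : r < 1 := mem_ball_zero_iff.mp hz
  have hr0 : 0 < r := norm_pos_iff.mpr hz0
  have hKsub : closedBall (0:ℂ) r ⊆ ball (0:ℂ) 1 := closedBall_subset_ball hr1
  -- maximize ‖deriv f - 1‖ on the closed ball
  have cont : ContinuousOn (fun ζ => ‖deriv f ζ - 1‖) (closedBall (0:ℂ) r) :=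
    (((hgd.mono hKsub).sub_const 1).continuousOn).norm
  obtain ⟨z₀, hz₀K, hmax⟩ := (isCompact_closedBall (0:ℂ) r).exists_isMaxOn
    ⟨0, by simp [hr0.le]⟩ cont
  have hmax' : ∀ ζ ∈ closedBall (0:ℂ) r, ‖deriv f ζ - 1‖ ≤ ‖deriv f z₀ - 1‖ :=
    fun ζ hζ => hmax hζ
  set w₀ : ℂ := deriv f z₀ - 1 with hw₀def
  set M : ℝ := ‖w₀‖ with hMdef
  have hzK : z ∈ closedBall (0:ℂ) r := by simp [mem_closedBall, hrdef, dist_zero_right]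
  have hM1 : 1 ≤ M := le_trans hcon (hmax' z hzK)
  have hz₀0 : z₀ ≠ 0 := by
    rintro rfl
    rw [hw₀def, hf'0] at hMdef
    simp at hMdef
    rw [hMdef] at hM1; norm_num at hM1
  set ρ : ℝ := ‖z₀‖ with hρdef
  have hρ0 : 0 < ρ := norm_pos_iff.mpr hz₀0
  have hρr : ρ ≤ r := by simpa [mem_closedBall, dist_zero_right] using hz₀K
  have hz₀ball : z₀ ∈ ball (0:ℂ) 1 := mem_ball_zero_iff.mpr (lt_of_le_of_lt hρr hr1)
  -- Schwarz lemma bound along the radius to z₀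
  have hS : ∀ t : ℝ, t ∈ Set.Ioo (0:ℝ) 1 → ‖deriv f ((t:ℂ) * z₀) - 1‖ ≤ M * t := by
    rintro t ⟨ht0, ht1⟩
    refine le_of_forall_pos_le_add fun ε hε => ?_
    have hwd : DifferentiableOn ℂ (fun ζ => deriv f ζ - 1) (ball (0:ℂ) ρ) :=
      (hgd.mono (fun ζ hζ => (ball_subset_ball (le_of_lt (lt_of_le_of_lt hρr hr1))) hζ)).sub_const 1
    have hw0 : deriv f (0:ℂ) - 1 = 0 := by rw [hf'0]; ring
    have hmaps : MapsTo (fun ζ => deriv f ζ - 1) (ball (0:ℂ) ρ)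
        (ball (deriv f (0:ℂ) - 1) (M + ε / t)) := by
      intro ζ hζ
      rw [hw0, mem_ball_zero_iff]
      have hζK : ζ ∈ closedBall (0:ℂ) r :=
        (ball_subset_closedBall.trans (closedBall_subset_closedBall hρr)) hζ
      exact lt_of_le_of_lt (hmax' ζ hζK) (by have : 0 < ε / t := div_pos hε ht0; linarith)
    have hmem : (t:ℂ) * z₀ ∈ ball (0:ℂ) ρ := by
      rw [mem_ball_zero_iff, norm_mul, Complex.norm_real, Real.norm_eq_abs,
        abs_of_pos ht0]
      nlinarith
    have hSch := Complex.dist_le_div_mul_dist_of_mapsTo_ball hwd (hmaps.mono_right ball_subset_closedBall) hmem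
    rw [hw0, dist_zero_right, dist_zero_right, norm_mul, Complex.norm_real,
      Real.norm_eq_abs, abs_of_pos ht0] at hSch
    calc ‖deriv f ((t:ℂ) * z₀) - 1‖ ≤ (M + ε / t) / ρ * (t * ρ) := hSch
      _ = M * t + ε := by field_simp
  -- derivative of deriv f at z₀
  have hgz : HasDerivAt (deriv f) (deriv (deriv f) z₀) z₀ :=
    ((hga z₀ hz₀ball).differentiableAt).hasDerivAt
  set c : ℂ := z₀ * deriv (deriv f) z₀ with hcdef
  set x : ℝ := w₀.re with hxdef
  set y : ℝ := w₀.im with hydef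
  set u : ℝ := c.re with hudef
  set v : ℝ := c.im with hvdef
  clear_value x y u v
  -- radial derivative: key1
  have hW1 : HasDerivAt (fun s : ℝ => deriv f ((s:ℂ) * z₀) - 1) c 1 := by
    have hgz1 : HasDerivAt (deriv f) (deriv (deriv f) z₀) (((1:ℝ):ℂ) * z₀) := by
      rwa [show (((1:ℝ):ℂ) * z₀) = z₀ by simp]
    have h := (hgz1.comp 1 (aux_curve1 z₀ 1)).sub_const 1
    have hc2 : deriv (deriv f) z₀ * z₀ = c := by rw [hcdef]; ring
    rw [hc2] at h
    exact h
  have hq1 : HasDerivAt (fun s : ℝ => Complex.normSq (deriv f ((s:ℂ) * z₀) - 1))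
      (2 * (x * u + y * v)) 1 := by
    have h := aux_normSq_hasDerivAt hW1
    have hW1val : deriv f (((1:ℝ):ℂ) * z₀) - 1 = w₀ := by simp [hw₀def]
    rw [hW1val, ← hxdef, ← hydef, ← hudef, ← hvdef] at h
    exact h
  have key1 : x * x + y * y ≤ x * u + y * v := by
    have hslope : Tendsto (slope (fun s : ℝ => Complex.normSq (deriv f ((s:ℂ) * z₀) - 1)) 1)
        (𝓝[<] (1:ℝ)) (𝓝 (2 * (x * u + y * v))) :=
      (hasDerivAt_iff_tendsto_slope.mp hq1).mono_left
        (nhdsWithin_mono 1 (fun a ha => ne_of_lt ha))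
    have hlow : Tendsto (fun t : ℝ => (x * x + y * y) * (1 + t)) (𝓝[<] (1:ℝ))
        (𝓝 ((x * x + y * y) * 2)) := by
      have hcont : Continuous fun t : ℝ => (x * x + y * y) * (1 + t) := by continuity
      have h2 := (hcont.tendsto (1:ℝ)).mono_left (nhdsWithin_le_nhds (s := Set.Iio (1:ℝ)))
      simpa [show (1:ℝ) + 1 = 2 by norm_num] using h2
    have hev : ∀ᶠ t in 𝓝[<] (1:ℝ), (x * x + y * y) * (1 + t)
        ≤ slope (fun s : ℝ => Complex.normSq (deriv f ((s:ℂ) * z₀) - 1)) 1 t := by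
      filter_upwards [Ioo_mem_nhdsLT_of_mem (Set.mem_Ioc.mpr ⟨zero_lt_one, le_refl (1:ℝ)⟩)]
        with t ht
      have hqt : Complex.normSq (deriv f ((t:ℂ) * z₀) - 1) ≤ (x * x + y * y) * t ^ 2 := by
        have h1 := hS t ht
        have h2 : Complex.normSq (deriv f ((t:ℂ) * z₀) - 1)
            = ‖deriv f ((t:ℂ) * z₀) - 1‖ ^ 2 := by
          rw [Complex.normSq_eq_norm_sq]
        have h3 : x * x + y * y = M ^ 2 := by
          rw [hxdef, hydef, hMdef, ← Complex.normSq_apply, Complex.normSq_eq_norm_sq]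
        rw [h2, h3]
        calc ‖deriv f ((t:ℂ) * z₀) - 1‖ ^ 2 ≤ (M * t) ^ 2 :=
              pow_le_pow_left₀ (norm_nonneg _) h1 2
          _ = M ^ 2 * t ^ 2 := by ring
      have hq1v : Complex.normSq (deriv f (((1:ℝ):ℂ) * z₀) - 1) = x * x + y * y := by
        simp only [Complex.ofReal_one, one_mul]
        rw [← hw₀def, Complex.normSq_apply, ← hxdef, ← hydef]
      rw [slope_def_field, hq1v]
      rw [le_div_iff_of_neg (by linarith [ht.2] : t - 1 < 0)]
      nlinarith [hqt]
    have := le_of_tendsto_of_tendsto hlow hslope hev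
    linarith
  -- angular derivative: key2
  have key2 : x * v = y * u := by
    have hW2 : HasDerivAt (fun θ : ℝ => deriv f (z₀ * Complex.exp (θ * I)) - 1) (c * I) 0 := by
      have hgz2 : HasDerivAt (deriv f) (deriv (deriv f) z₀) (z₀ * Complex.exp (((0:ℝ):ℂ) * I)) := by
        rwa [show (z₀ * Complex.exp (((0:ℝ):ℂ) * I)) = z₀ by simp]
      have h := (hgz2.comp 0 (aux_curve2 z₀)).sub_const 1
      have hc2 : deriv (deriv f) z₀ * (z₀ * I) = c * I := by rw [hcdef]; ring
      rw [hc2] at h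
      exact h
    have hp := aux_normSq_hasDerivAt hW2
    have hW2val : deriv f (z₀ * Complex.exp (((0:ℝ):ℂ) * I)) - 1 = w₀ := by
      simp [hw₀def]
    rw [hW2val, ← hxdef, ← hydef] at hp
    have hlocmax : IsLocalMax (fun θ : ℝ => Complex.normSq (deriv f (z₀ * Complex.exp (θ * I)) - 1)) 0 := by
      apply Filter.Eventually.of_forall
      intro θ
      have hmemK : z₀ * Complex.exp ((θ:ℂ) * I) ∈ closedBall (0:ℂ) r := by
        rw [mem_closedBall, dist_zero_right, norm_mul,
          Complex.norm_exp_ofReal_mul_I, mul_one]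
        exact hρr
      have h1 := hmax' _ hmemK
      have h2 : Complex.normSq (deriv f (z₀ * Complex.exp ((θ:ℂ) * I)) - 1)
          = ‖deriv f (z₀ * Complex.exp ((θ:ℂ) * I)) - 1‖ ^ 2 := by
        rw [Complex.normSq_eq_norm_sq]
      have h3 : Complex.normSq (deriv f (z₀ * Complex.exp (((0:ℝ):ℂ) * I)) - 1) = ‖w₀‖ ^ 2 := by
        rw [hW2val, Complex.normSq_eq_norm_sq]
      simp only [h3]
      rw [h2]
      exact pow_le_pow_left₀ (norm_nonneg _) h1 2
    have hzero := hlocmax.hasDerivAt_eq_zero hp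
    have hCIre : (c * I).re = -v := by simp [hvdef]
    have hCIim : (c * I).im = u := by simp [hudef]
    rw [hCIre, hCIim] at hzero
    nlinarith [hzero]
  -- the hypothesis at z₀
  have hd0 : deriv f z₀ ≠ 0 := hne z₀ hz₀ball
  have hN : 0 < Complex.normSq (deriv f z₀) := Complex.normSq_pos.mpr hd0
  have H := hre z₀ hz₀ball
  rw [← hcdef] at H
  have H2 : (c / deriv f z₀).re < 1 / 2 := by
    rw [Complex.add_re, Complex.one_re] at H
    linarith
  have hdre : (deriv f z₀).re = x + 1 := by
    rw [hxdef, hw₀def]; simp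
  have hdim : (deriv f z₀).im = y := by
    rw [hydef, hw₀def]; simp
  have hNval : Complex.normSq (deriv f z₀) = (x + 1) * (x + 1) + y * y := by
    rw [Complex.normSq_apply, hdre, hdim]
  rw [Complex.div_re, ← add_div, div_lt_iff₀ hN, hdre, hdim, hNval] at H2
  rw [← hudef, ← hvdef] at H2
  have hs1 : 1 ≤ x * x + y * y := by
    have h3 : x * x + y * y = M ^ 2 := by
      rw [hxdef, hydef, hMdef, ← Complex.normSq_apply, Complex.normSq_eq_norm_sq]
    rw [h3]; nlinarith
  exact aux_final key1 key2 hs1 H2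
end

section
/- Let f be analytic in the open unit disc Δ = {z ∈ ℂ : |z| < 1} with f(0) = 0 and f′(0) = 1, and suppose f(z) ≠ 0 for all z ∈ Δ with z ≠ 0. If f is starlike of order 1/2, i.e. Re(z·f′(z)/f(z)) > 1/2 for all z ∈ Δ with z ≠ 0, then Re(f(z)/z) > 1/2 for all z ∈ Δ with z ≠ 0. -/
open Complex Metric Filter Set

lemma jack_aux (w : ℂ → ℂ) (hw : DifferentiableOn ℂ w (ball (0:ℂ) 1))
    (hw0 : w 0 = 0)
    (hne : ∀ z ∈ ball (0:ℂ) 1, 1 + w z ≠ 0)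
    (hlt : ∀ z ∈ ball (0:ℂ) 1, (z * deriv w z / (1 + w z)).re < 1/2) :
    ∀ z ∈ ball (0:ℂ) 1, ‖w z‖ < 1 := by
  by_contra hcon
  push_neg at hcon
  obtain ⟨z₀, hz₀, hz₀w⟩ := hcon
  rw [mem_ball_zero_iff] at hz₀
  set K : Set ℂ := closedBall 0 (‖z₀‖) with hK
  have hKball : K ⊆ ball (0:ℂ) 1 := by
    intro z hz
    rw [mem_closedBall_zero_iff] at hz
    rw [mem_ball_zero_iff]
    calc ‖z‖ ≤ ‖z₀‖ := hz
    _ < 1 := hz₀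
  have hKcpt : IsCompact K := isCompact_closedBall _ _
  set A : Set ℂ := K ∩ {z | 1 ≤ ‖w z‖} with hA
  have hAcl : IsClosed A :=
    ContinuousOn.preimage_isClosed_of_isClosed
      (continuous_norm.comp_continuousOn (hw.continuousOn.mono hKball))
      isClosed_closedBall isClosed_Ici
  have hAcpt : IsCompact A := hKcpt.of_isClosed_subset hAcl inter_subset_left
  have hAne : A.Nonempty := ⟨z₀, by simpa [hA, hK] using hz₀w⟩
  obtain ⟨z₁, hz₁A, hz₁min⟩ :=
    hAcpt.exists_isMinOn hAne (continuous_norm.continuousOn)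
  rw [isMinOn_iff] at hz₁min
  set r : ℝ := ‖z₁‖ with hr
  have hz₁K : z₁ ∈ K := hz₁A.1
  have hrz₀ : r ≤ ‖z₀‖ := by
    have := hz₁K; rwa [hK, mem_closedBall_zero_iff] at this
  have hr1 : r < 1 := lt_of_le_of_lt hrz₀ hz₀
  have hz₁w : 1 ≤ ‖w z₁‖ := hz₁A.2
  have hz₁ball : z₁ ∈ ball (0:ℂ) 1 := hKball hz₁K
  -- |w| ≤ 1 on the closed ball of radius r
  have hball : ∀ z : ℂ, ‖z‖ ≤ r → ‖w z‖ ≤ 1 := by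
    intro z hz
    by_contra hgt
    push_neg at hgt
    have hzball : z ∈ ball (0:ℂ) 1 := by
      rw [mem_ball_zero_iff]; exact lt_of_le_of_lt hz hr1
    have hzne : z ≠ 0 := by
      intro h
      rw [h, hw0] at hgt
      simp at hgt
      linarith
    have hzpos : 0 < ‖z‖ := by
      simpa [norm_pos_iff] using hzne
    have hc : ContinuousAt (fun t : ℝ => ‖w ((t:ℂ) * z)‖) 1 := by
      apply continuous_norm.continuousAt.comp
      apply ContinuousAt.comp
      · have : DifferentiableAt ℂ w z :=
          hw.differentiableAt (isOpen_ball.mem_nhds hzball)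
        simpa using this.continuousAt
      · exact (continuous_ofReal.mul continuous_const).continuousAt
    have hev : ∀ᶠ t : ℝ in nhds 1, 1 < ‖w ((t:ℂ) * z)‖ := by
      apply Filter.Tendsto.eventually_const_lt _ hc
      simpa using hgt
    have hev' : ∀ᶠ t : ℝ in nhdsWithin 1 (Set.Iio 1),
        1 < ‖w ((t:ℂ) * z)‖ ∧ t ∈ Set.Ioo (0:ℝ) 1 := by
      refine (hev.filter_mono nhdsWithin_le_nhds).and ?_
      have : Set.Ioo (0:ℝ) 1 ∈ nhdsWithin 1 (Set.Iio 1) := Ioo_mem_nhdsLT (by norm_num)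
      exact eventually_mem_set.2 this
    obtain ⟨t, ht, htIoo⟩ := hev'.exists
    set z' : ℂ := (t:ℂ) * z with hz'
    have habs' : ‖z'‖ = t * ‖z‖ := by
      rw [hz', norm_mul, Complex.norm_real, Real.norm_eq_abs, abs_of_pos htIoo.1]
    have hlt' : ‖z'‖ < r := by
      rw [habs']
      calc t * ‖z‖ < 1 * ‖z‖ := by
            exact mul_lt_mul_of_pos_right htIoo.2 hzpos
      _ = ‖z‖ := one_mul _
      _ ≤ r := hz
    have hz'A : z' ∈ A := by
      constructor
      · rw [hK, mem_closedBall_zero_iff]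
        exact le_trans (le_of_lt hlt') hrz₀
      · exact le_of_lt ht
    exact absurd (hz₁min z' hz'A) (not_le.2 hlt')
  have hwz₁ : ‖w z₁‖ = 1 := le_antisymm (hball z₁ le_rfl) hz₁w
  have hz₁ne : z₁ ≠ 0 := by
    intro h
    rw [h, hw0] at hwz₁
    simp at hwz₁
  have hrpos : 0 < r := by simpa [hr, norm_pos_iff] using hz₁ne
  have hwz₁ne : w z₁ ≠ 0 := by
    intro h; rw [h] at hwz₁; simp at hwz₁
  -- the rescaled function W
  set W : ℂ → ℂ := fun ζ => w (z₁ * ζ) / w z₁ with hWdef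
  have hWd : ∀ ζ : ℂ, ‖ζ‖ < r⁻¹ → DifferentiableAt ℂ W ζ := by
    intro ζ hζ
    have hmem : z₁ * ζ ∈ ball (0:ℂ) 1 := by
      rw [mem_ball_zero_iff]
      have : ‖z₁ * ζ‖ = r * ‖ζ‖ := by rw [norm_mul, ← hr]
      rw [show ‖z₁ * ζ‖ = ‖z₁ * ζ‖ from rfl, this]
      calc r * ‖ζ‖ < r * r⁻¹ := by
            exact mul_lt_mul_of_pos_left hζ hrpos
      _ = 1 := mul_inv_cancel₀ (ne_of_gt hrpos)
    have h1 : DifferentiableAt ℂ w (z₁ * ζ) :=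
      hw.differentiableAt (isOpen_ball.mem_nhds hmem)
    exact (h1.comp ζ ((differentiableAt_id.const_mul z₁))).div_const _
  have hrinv : (1:ℝ) < r⁻¹ := by
    rw [lt_inv_comm₀ one_pos hrpos]; simpa using hr1
  have hWdOn : DifferentiableOn ℂ W (ball (0:ℂ) 1) := by
    intro ζ hζ
    rw [mem_ball_zero_iff] at hζ
    exact (hWd ζ (lt_trans hζ hrinv)).differentiableWithinAt
  have hW0 : W 0 = 0 := by simp [hWdef, hw0]
  have hW1 : W 1 = 1 := by simp [hWdef, div_self hwz₁ne]
  have hWle : ∀ ζ : ℂ, ‖ζ‖ ≤ 1 → ‖W ζ‖ ≤ 1 := by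
    intro ζ hζ
    rw [hWdef]
    simp only [norm_div, norm_mul, hwz₁]
    rw [div_one]
    apply hball
    rw [norm_mul, ← hr]
    calc r * ‖ζ‖ ≤ r * 1 := by
          exact mul_le_mul_of_nonneg_left hζ (le_of_lt hrpos)
    _ = r := mul_one r
  -- strict inequality inside by the maximum principle
  have hWlt : ∀ ζ : ℂ, ‖ζ‖ < 1 → ‖W ζ‖ < 1 := by
    intro ζ hζ
    rcases lt_or_ge (‖W ζ‖) 1 with h | h
    · exact h
    exfalso
    have hζball : ζ ∈ ball (0:ℂ) 1 := mem_ball_zero_iff.2 hζ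
    have heq : ‖W ζ‖ = 1 := le_antisymm (hWle ζ (le_of_lt hζ)) h
    have hmax : IsMaxOn (norm ∘ W) (ball (0:ℂ) 1) ζ := by
      intro x hx
      rw [mem_ball_zero_iff] at hx
      show ‖W x‖ ≤ ‖W ζ‖
      rw [show ‖W ζ‖ = ‖W ζ‖ from rfl, heq]
      exact hWle x (le_of_lt hx)
    have := Complex.eqOn_of_isPreconnected_of_isMaxOn_norm
      (convex_ball (0:ℂ) 1).isPreconnected isOpen_ball hWdOn hζball hmax
    have h0 := this (mem_ball_zero_iff.2 (by norm_num : ‖(0:ℂ)‖ < 1))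
    rw [hW0] at h0
    have : ‖W ζ‖ = 0 := by
      rw [show W ζ = Function.const ℂ (W ζ) 0 from rfl, ← h0]; simp
    rw [heq] at this; norm_num at this
  -- Schwarz lemma
  have hschwarz : ∀ ζ : ℂ, ‖ζ‖ < 1 → ‖W ζ‖ ≤ ‖ζ‖ := by
    intro ζ hζ
    apply Complex.norm_le_norm_of_mapsTo_ball hWdOn _ hW0 hζ
    intro x hx
    rw [mem_ball_zero_iff] at hx
    rw [mem_closedBall_zero_iff]
    exact le_of_lt (hWlt x hx)
  -- the boundary derivative k
  set k : ℂ := deriv W 1 with hkdef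
  have hWd1 : HasDerivAt W k 1 := by
    have := hWd 1 (by simpa using hrinv)
    exact this.hasDerivAt
  -- real part of k is at least 1
  have hk_re : 1 ≤ k.re := by
    have hslope : Tendsto (slope W 1) (nhdsWithin 1 {(1:ℂ)}ᶜ) (nhds k) :=
      hasDerivAt_iff_tendsto_slope.1 hWd1
    have hcoe : Tendsto (fun ρ : ℝ => (ρ : ℂ)) (nhdsWithin 1 (Set.Iio 1))
        (nhdsWithin 1 {(1:ℂ)}ᶜ) := by
      apply tendsto_nhdsWithin_of_tendsto_nhds_of_eventually_within
      · exact (Complex.continuous_ofReal.tendsto 1).mono_left nhdsWithin_le_nhds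
      · filter_upwards [self_mem_nhdsWithin] with ρ hρ
        simp only [Set.mem_Iio] at hρ
        simp only [Set.mem_compl_iff, Set.mem_singleton_iff]
        exact_mod_cast ne_of_lt hρ
    have htend : Tendsto (fun ρ : ℝ => (slope W 1 (ρ:ℂ)).re)
        (nhdsWithin 1 (Set.Iio 1)) (nhds k.re) :=
      (Complex.continuous_re.tendsto k).comp (hslope.comp hcoe)
    apply ge_of_tendsto htend
    filter_upwards [Ioo_mem_nhdsLT (by norm_num : (0:ℝ) < 1)]
      with ρ hρ
    obtain ⟨hρ0, hρ1⟩ := hρ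
    have hρpos : (0:ℝ) < 1 - ρ := by linarith
    have hWρ : ‖W ρ‖ ≤ ρ := by
      have := hschwarz (ρ:ℂ) (by rw [Complex.norm_real, Real.norm_eq_abs, abs_of_pos hρ0]; exact hρ1)
      rwa [Complex.norm_real, Real.norm_eq_abs, abs_of_pos hρ0] at this
    have hsl : slope W 1 (ρ:ℂ) = (1 - W ρ) / ((1 - ρ : ℝ) : ℂ) := by
      rw [slope_def_field, hW1]
      push_cast
      have hρne : (ρ:ℂ) ≠ 1 := by exact_mod_cast ne_of_lt hρ1
      rw [div_eq_div_iff (sub_ne_zero.2 hρne) (sub_ne_zero.2 hρne.symm)]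
      ring
    rw [hsl, Complex.div_ofReal_re]
    rw [le_div_iff₀ hρpos, one_mul]
    have h1 : (W ρ).re ≤ ρ := le_trans (Complex.re_le_norm _) hWρ
    simp only [Complex.sub_re, Complex.one_re]
    linarith
  -- imaginary part of k is 0
  have hk_im : k.im = 0 := by
    set c : ℝ → ℂ := circleMap 0 1 with hcdef
    have hc0 : c 0 = 1 := by simp [hcdef, circleMap]
    have hcd : HasDerivAt c I 0 := by
      have := hasDerivAt_circleMap (0:ℂ) 1 0
      simpa [circleMap] using this
    set u : ℝ → ℂ := W ∘ c with hudef
    have hu : HasDerivAt u (I * k) 0 := by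
      have h1 : HasDerivAt W k (c 0) := by rw [hc0]; exact hWd1
      have := h1.scomp 0 hcd
      simpa [smul_eq_mul] using this
    have hre : HasDerivAt (fun t => (u t).re) (I * k).re 0 :=
      Complex.reCLM.hasFDerivAt.comp_hasDerivAt 0 hu
    have him : HasDerivAt (fun t => (u t).im) (I * k).im 0 :=
      Complex.imCLM.hasFDerivAt.comp_hasDerivAt 0 hu
    set ψ : ℝ → ℝ := fun t => (u t).re ^ 2 + (u t).im ^ 2 with hψdef
    have hψd : HasDerivAt ψ
        ((2:ℕ) * (u 0).re ^ 1 * (I*k).re + (2:ℕ) * (u 0).im ^ 1 * (I*k).im) 0 :=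
      (hre.pow 2).add (him.pow 2)
    have hu0 : u 0 = 1 := by rw [hudef]; simp [hc0, hW1]
    have hmax : IsLocalMax ψ 0 := by
      apply Filter.Eventually.of_forall
      intro t
      have habs : ‖u t‖ ≤ 1 := by
        apply hWle
        simp [hcdef]
      have h1 : (u t).re ^ 2 + (u t).im ^ 2 = ‖u t‖ ^ 2 := by
        rw [Complex.sq_norm, Complex.normSq_apply]; ring
      have h2 : ‖u t‖ ^ 2 ≤ 1 := by nlinarith [norm_nonneg (u t)]
      rw [hψdef]
      simp only []
      rw [h1, hu0]
      simpa using h2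
    have hzero := hmax.hasDerivAt_eq_zero hψd
    rw [hu0] at hzero
    simp only [Complex.one_re, Complex.one_im, Complex.mul_re, Complex.mul_im,
      Complex.I_re, Complex.I_im] at hzero
    simpa using hzero
  -- chain rule at 1 : k * w z₁ = z₁ * deriv w z₁
  have hw1 : HasDerivAt w (deriv w z₁) z₁ :=
    (hw.differentiableAt (isOpen_ball.mem_nhds hz₁ball)).hasDerivAt
  have hkeq : k * w z₁ = z₁ * deriv w z₁ := by
    have hmul : HasDerivAt (fun ζ : ℂ => z₁ * ζ) z₁ 1 := by
      simpa using (hasDerivAt_id (1:ℂ)).const_mul z₁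
    have hw1' : HasDerivAt w (deriv w z₁) (z₁ * 1) := by rwa [mul_one]
    have hcomp : HasDerivAt (fun ζ => w (z₁ * ζ)) (deriv w z₁ * z₁) 1 :=
      hw1'.comp 1 hmul
    have hWalt : HasDerivAt W (deriv w z₁ * z₁ / w z₁) 1 := hcomp.div_const _
    have : k = deriv w z₁ * z₁ / w z₁ := hWd1.unique hWalt
    rw [this]
    field_simp
  -- compute the real part at z₁ and contradict hlt
  set u₁ : ℂ := w z₁ with hu₁def
  have hu₁ne : u₁ ≠ 0 := hwz₁ne
  have h1u : 1 + u₁ ≠ 0 := hne z₁ hz₁ball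
  have hnormSq : Complex.normSq u₁ = 1 := by
    rw [← Complex.sq_norm, hwz₁]; norm_num
  have hconj : (starRingEnd ℂ) u₁ = u₁⁻¹ := by
    rw [Complex.inv_def, hnormSq]; simp
  have hval : (u₁ / (1 + u₁)).re = 1/2 := by
    have h2 : u₁/(1+u₁) + (starRingEnd ℂ) (u₁/(1+u₁)) = 1 := by
      rw [map_div₀, map_add, map_one, hconj]
      rw [div_add_div _ _ h1u (by
        intro h
        apply h1u
        have : u₁ * (1 + u₁⁻¹) = u₁ * 0 := by rw [h]
        rw [mul_add, mul_inv_cancel₀ hu₁ne, mul_zero] at this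
        rw [add_comm] at this
        simpa using this)]
      rw [div_eq_one_iff_eq (by
        intro h
        rcases mul_eq_zero.1 h with h' | h'
        · exact h1u h'
        · apply h1u
          have : u₁ * (1 + u₁⁻¹) = u₁ * 0 := by rw [h']
          rw [mul_add, mul_inv_cancel₀ hu₁ne, mul_zero] at this
          rw [add_comm] at this
          simpa using this)]
      field_simp
      ring
    rw [Complex.add_conj] at h2
    have : (2:ℝ) * (u₁/(1+u₁)).re = 1 := by exact_mod_cast h2
    linarith
  have hfin : 1/2 ≤ (z₁ * deriv w z₁ / (1 + u₁)).re := by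
    rw [← hkeq]
    have hk : k = ((k.re : ℝ) : ℂ) := by
      apply Complex.ext <;> simp [hk_im]
    rw [hk, mul_div_assoc, Complex.re_ofReal_mul, hval]
    linarith
  exact absurd (hlt z₁ hz₁ball) (not_lt.2 hfin)

theorem re_f_div_z_gt_half_of_starlike_half (f : ℂ → ℂ)
    (hf : DifferentiableOn ℂ f (ball (0:ℂ) 1))
    (hf0 : f 0 = 0) (hf'0 : deriv f 0 = 1)
    (hfne : ∀ z ∈ ball (0:ℂ) 1, z ≠ 0 → f z ≠ 0)
    (hstar : ∀ z ∈ ball (0:ℂ) 1, z ≠ 0 → 1 / 2 < (z * deriv f z / f z).re) :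
    ∀ z ∈ ball (0:ℂ) 1, z ≠ 0 → 1 / 2 < (f z / z).re := by
  set h : ℂ → ℂ := dslope f 0 with hhdef
  have h0ball : (0:ℂ) ∈ ball (0:ℂ) 1 := mem_ball_zero_iff.2 (by norm_num)
  have hdiff : ∀ z ∈ ball (0:ℂ) 1, DifferentiableAt ℂ h z := by
    intro z hz
    rcases eq_or_ne z 0 with rfl | hzne
    · have han : AnalyticAt ℂ f 0 := hf.analyticAt (isOpen_ball.mem_nhds h0ball)
      obtain ⟨p, hp⟩ := han
      exact hp.has_fpower_series_dslope_fslope.analyticAt.differentiableAt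
    · rw [hhdef, differentiableAt_dslope_of_ne hzne]
      exact hf.differentiableAt (isOpen_ball.mem_nhds hz)
  have h0 : h 0 = 1 := by rw [hhdef, dslope_same, hf'0]
  have hhz : ∀ z : ℂ, z ≠ 0 → h z = f z / z := by
    intro z hz
    rw [hhdef, dslope_of_ne f hz, slope_def_field, hf0, sub_zero, sub_zero]
  have hfzh : ∀ z : ℂ, f z = z * h z := by
    intro z
    have := sub_smul_dslope f 0 z
    rw [sub_zero, hf0, sub_zero, smul_eq_mul] at this
    rw [← this, hhdef]
  have hhne : ∀ z ∈ ball (0:ℂ) 1, h z ≠ 0 := by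
    intro z hz
    rcases eq_or_ne z 0 with rfl | hzne
    · rw [h0]; norm_num
    · rw [hhz z hzne]
      exact div_ne_zero (hfne z hz hzne) hzne
  set w : ℂ → ℂ := fun z => (h z)⁻¹ - 1 with hwdef
  have hwd : DifferentiableOn ℂ w (ball (0:ℂ) 1) := fun z hz =>
    (((hdiff z hz).inv (hhne z hz)).sub_const 1).differentiableWithinAt
  have hw0 : w 0 = 0 := by rw [hwdef]; simp [h0]
  have h1w : ∀ z : ℂ, 1 + w z = (h z)⁻¹ := by intro z; rw [hwdef]; ring
  have hne : ∀ z ∈ ball (0:ℂ) 1, 1 + w z ≠ 0 := by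
    intro z hz; rw [h1w]; exact inv_ne_zero (hhne z hz)
  have hlt : ∀ z ∈ ball (0:ℂ) 1, (z * deriv w z / (1 + w z)).re < 1/2 := by
    intro z hz
    rcases eq_or_ne z 0 with rfl | hzne
    · simp
    · have hdz := hdiff z hz
      have hnz := hhne z hz
      have hderivw : deriv w z = -deriv h z / (h z) ^ 2 := by
        have : HasDerivAt w (-deriv h z / (h z) ^ 2) z :=
          (hdz.hasDerivAt.inv hnz).sub_const 1
        exact this.deriv
      have hderivf : deriv f z = h z + z * deriv h z := by
        have hfd : HasDerivAt (fun x : ℂ => x * h x) (1 * h z + z * deriv h z) z :=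
          (hasDerivAt_id z).mul hdz.hasDerivAt
        rw [one_mul] at hfd
        have : (fun x : ℂ => x * h x) = f := funext fun x => (hfzh x).symm
        rw [this] at hfd
        exact hfd.deriv
      have hkey : z * deriv w z / (1 + w z) = 1 - z * deriv f z / f z := by
        rw [hderivw, h1w, hderivf, hfzh z]
        field_simp
        ring
      rw [hkey]
      have := hstar z hz hzne
      simp only [Complex.sub_re, Complex.one_re]
      linarith
  have hjack := jack_aux w hwd hw0 hne hlt
  intro z hz hzne
  have hwz := hjack z hz
  rw [hwdef] at hwz
  set v : ℂ := h z with hvdef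
  have hvne : v ≠ 0 := hhne z hz
  have habs : ‖1 - v‖ < ‖v‖ := by
    have hwz' : ‖v⁻¹ - 1‖ < 1 := hwz
    have heq : v⁻¹ - 1 = (1 - v) / v := by field_simp
    rw [heq, norm_div, div_lt_one (by simpa [norm_pos_iff] using hvne)] at hwz'
    exact hwz'
  have hns : Complex.normSq (1 - v) < Complex.normSq v := by
    rw [← Complex.sq_norm, ← Complex.sq_norm]
    have h1 := norm_nonneg (1 - v)
    nlinarith
  have hexp : Complex.normSq (1 - v) = 1 + Complex.normSq v - 2 * v.re := by
    rw [Complex.normSq_sub]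
    simp [Complex.normSq_one]
  rw [hexp] at hns
  rw [← hhz z hzne, ← hvdef]
  linarith
end
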